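/- arXiv:2203.02943 — 6 statements merged into one kernel-verified Lean document; each statement's English description precedes it below -/
import Mathlib

section
/- Let H ∈ (0,1/2) and α ∈ (−1/2−H, 1/2−H). Then there exists a constant C > 0 such that for every positive integer n, ∫₀¹ ∫₀ᵗ (t−s)^α |k_n(s,t)| ds dt ≤ C · n^{−α−H−1/2}, where k_n(s,t) = (t−s)^{H−1/2} − (⌊nt⌋/n − s)_+^{H−1/2}. -/
open MeasureTheory Real Set

/-- Truncated power: `(x)_+^β = x^β` if `x > 0`, else `0`. -/
noncomputable def posPow (x β : ℝ) : ℝ := if 0 < x then x ^ β else 0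

/-- The discretization kernel `k_n(s,t) = (t-s)^{H-1/2} - (⌊nt⌋/n - s)_+^{H-1/2}`. -/
noncomputable def kn (H : ℝ) (n : ℕ) (s t : ℝ) : ℝ :=
  (t - s) ^ (H - 1/2) - posPow ((⌊(n : ℝ) * t⌋ : ℝ) / n - s) (H - 1/2)

/-- `∫⁻ s in Ioc a b, (c - s)^p = ((c-a)^(p+1) - (c-b)^(p+1))/(p+1)`. -/
lemma lintA {a b c p : ℝ} (hab : a ≤ b) (hbc : b ≤ c) (hp : -1 < p ∨ (p ≠ -1 ∧ b < c)) :
    ∫⁻ s in Ioc a b, ENNReal.ofReal ((c - s) ^ p)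
      = ENNReal.ofReal (((c - a) ^ (p+1) - (c - b) ^ (p+1)) / (p+1)) := by
  have hp' : -1 < p ∨ p ≠ -1 ∧ (0:ℝ) ∉ Set.uIcc (c - b) (c - a) := by
    rcases hp with hp | ⟨hp, hbc'⟩
    · exact Or.inl hp
    · refine Or.inr ⟨hp, ?_⟩
      rw [Set.uIcc_of_le (by linarith)]
      rintro ⟨h1, h2⟩
      linarith
  have hII : IntervalIntegrable (fun y : ℝ => y ^ p) volume (c - b) (c - a) := by
    rcases hp' with hp' | ⟨_, h0⟩
    · exact intervalIntegral.intervalIntegrable_rpow' hp'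
    · exact intervalIntegral.intervalIntegrable_rpow (Or.inr h0)
  have hII2 : IntervalIntegrable (fun s : ℝ => (c - s) ^ p) volume a b := by
    simpa using (hII.comp_sub_left c).symm
  have hnn : 0 ≤ᵐ[volume.restrict (Ioc a b)] fun s : ℝ => (c - s) ^ p := by
    rw [Filter.EventuallyLE, ae_restrict_iff' measurableSet_Ioc]
    exact Filter.Eventually.of_forall fun s hs => by
      simpa using rpow_nonneg (by linarith [hs.2] : (0:ℝ) ≤ c - s) p
  rw [← ofReal_integral_eq_lintegral_ofReal hII2.1 hnn]
  congr 1
  rw [← intervalIntegral.integral_of_le hab,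
    intervalIntegral.integral_comp_sub_left (fun y : ℝ => y ^ p) c,
    integral_rpow hp']

/-- Bernoulli-type bound: `x^β - (x+δ)^β ≤ (-β) δ x^(β-1)` for `β < 0`. -/
lemma bern {β x δ : ℝ} (hβ : β < 0) (hx : 0 < x) (hδ : 0 ≤ δ) :
    x ^ β - (x + δ) ^ β ≤ (-β) * δ * x ^ (β - 1) := by
  have h0 : (0:ℝ) ∉ Set.uIcc x (x + δ) := by
    rw [Set.uIcc_of_le (by linarith)]
    rintro ⟨h1, h2⟩; linarith
  have hint : -1 < β - 1 ∨ β - 1 ≠ -1 ∧ (0:ℝ) ∉ Set.uIcc x (x + δ) :=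
    Or.inr ⟨by intro h; apply hβ.ne; linarith, h0⟩
  have hII : IntervalIntegrable (fun y : ℝ => y ^ (β - 1)) volume x (x + δ) :=
    intervalIntegral.intervalIntegrable_rpow (Or.inr h0)
  have hval : ∫ y in x..(x + δ), y ^ (β - 1) = ((x + δ) ^ β - x ^ β) / β := by
    rw [integral_rpow hint]; norm_num
  have hmono : ∫ y in x..(x + δ), y ^ (β - 1) ≤ ∫ _ in x..(x + δ), x ^ (β - 1) := by
    apply intervalIntegral.integral_mono_on (by linarith) hII intervalIntegrable_const
    intro y hy
    exact rpow_le_rpow_of_nonpos hx hy.1 (by linarith)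
  rw [hval, intervalIntegral.integral_const, smul_eq_mul] at hmono
  rw [div_le_iff_of_neg hβ] at hmono
  nlinarith [hmono]

/-- doubling bound for powers -/
lemma helperB {α x y : ℝ} (hα : α ≤ 1) (hx : 0 < x) (h1 : x ≤ y) (h2 : y ≤ 2*x) :
    y ^ α ≤ 2 * x ^ α := by
  rcases le_or_gt α 0 with h | h
  · have h3 := rpow_le_rpow_of_nonpos hx h1 h
    have hx' : 0 < x ^ α := rpow_pos_of_pos hx α
    linarith
  · calc y ^ α ≤ (2*x) ^ α := rpow_le_rpow (by linarith) h2 h.le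
      _ = 2 ^ α * x ^ α := mul_rpow (by norm_num) hx.le
      _ ≤ 2 * x ^ α := by
          have h2α : (2:ℝ) ^ α ≤ 2 := by
            calc (2:ℝ) ^ α ≤ 2 ^ (1:ℝ) := rpow_le_rpow_of_exponent_le one_le_two hα
              _ = 2 := rpow_one 2
          have h4 : (0:ℝ) ≤ x ^ α := rpow_nonneg hx.le α
          nlinarith

lemma inner_abstract (α β t u ε : ℝ) (hβ1 : -(1/2:ℝ) < β) (hβ0 : β < 0)
    (hαβ1 : -1 < α + β) (hαβ0 : α + β < 0) (hα1 : α ≤ 1)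
    (ht0 : 0 < t) (hu0 : 0 ≤ u) (hut : u ≤ t) (hδε : t - u ≤ ε) :
    ∫⁻ s in Ioc (0:ℝ) t, ENNReal.ofReal ((t - s) ^ α * |(t - s) ^ β - posPow (u - s) β|)
      ≤ ENNReal.ofReal ((2*(-β)/(-(α+β)) + 1 + 2/(β+1) + 1/(α+β+1)) * ε ^ (α+β+1)) := by
  have hε0 : 0 ≤ ε := le_trans (by linarith) hδε
  have hC0 : 0 ≤ 2*(-β)/(-(α+β)) + 1 + 2/(β+1) + 1/(α+β+1) := by
    have h1 : 0 ≤ 2*(-β)/(-(α+β)) := div_nonneg (by linarith) (by linarith)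
    have h2 : (0:ℝ) ≤ 2/(β+1) := div_nonneg (by norm_num) (by linarith)
    have h3 : (0:ℝ) ≤ 1/(α+β+1) := div_nonneg (by norm_num) (by linarith)
    linarith
  rcases eq_or_lt_of_le (sub_nonneg.mpr hut) with hδ | hδ
  · -- degenerate case u = t
    have hut' : u = t := by linarith [hδ]
    have hzero : ∀ s ∈ Ioc (0:ℝ) t,
        ENNReal.ofReal ((t - s) ^ α * |(t - s) ^ β - posPow (u - s) β|) = 0 := by
      intro s hs
      rcases lt_or_eq_of_le hs.2 with h | h
      · have hts : 0 < t - s := by linarith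
        have : posPow (u - s) β = (t - s) ^ β := by
          rw [hut']; exact if_pos hts
        rw [this, sub_self, abs_zero, mul_zero, ENNReal.ofReal_zero]
      · have : posPow (u - s) β = 0 := by
          rw [hut', h]; exact if_neg (by simp)
        rw [this, h, sub_self, zero_rpow hβ0.ne, sub_zero, abs_zero, mul_zero,
          ENNReal.ofReal_zero]
    calc ∫⁻ s in Ioc (0:ℝ) t, ENNReal.ofReal ((t - s) ^ α * |(t - s) ^ β - posPow (u - s) β|)
        = ∫⁻ _ in Ioc (0:ℝ) t, 0 :=
          setLIntegral_congr_fun measurableSet_Ioc hzero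
      _ = 0 := by simp
      _ ≤ _ := zero_le
  · -- main case 0 < d := t - u
    set d : ℝ := t - u with hd
    have hd0 : 0 < d := hδ
    set a : ℝ := max 0 (u - d) with ha
    have ha0 : 0 ≤ a := le_max_left _ _
    have hau : a ≤ u := max_le hu0 (by linarith)
    have hγ0 : 0 < α + β + 1 := by linarith
    -- Piece 3
    have piece3 : ∫⁻ s in Ioc u t,
        ENNReal.ofReal ((t - s) ^ α * |(t - s) ^ β - posPow (u - s) β|)
        ≤ ENNReal.ofReal (d ^ (α+β+1) / (α+β+1)) := by
      have hb : ∀ s ∈ Ioc u t,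
          ENNReal.ofReal ((t - s) ^ α * |(t - s) ^ β - posPow (u - s) β|)
            ≤ ENNReal.ofReal ((t - s) ^ (α+β)) := by
        intro s hs
        apply ENNReal.ofReal_le_ofReal
        have hpp : posPow (u - s) β = 0 := if_neg (by push_neg; linarith [hs.1])
        rw [hpp, sub_zero, abs_of_nonneg (rpow_nonneg (by linarith [hs.2]) β)]
        rcases lt_or_eq_of_le hs.2 with h | h
        · exact le_of_eq (rpow_add (by linarith : (0:ℝ) < t - s) α β).symm
        · rw [h, sub_self, zero_rpow hβ0.ne, mul_zero]
          exact rpow_nonneg le_rfl _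
      calc ∫⁻ s in Ioc u t, ENNReal.ofReal ((t - s) ^ α * |(t - s) ^ β - posPow (u - s) β|)
          ≤ ∫⁻ s in Ioc u t, ENNReal.ofReal ((t - s) ^ (α+β)) :=
            setLIntegral_mono' measurableSet_Ioc hb
        _ = ENNReal.ofReal (((t - u) ^ (α+β+1) - (t - t) ^ (α+β+1)) / (α+β+1)) :=
            lintA hut le_rfl (Or.inl hαβ1)
        _ = ENNReal.ofReal (d ^ (α+β+1) / (α+β+1)) := by
            rw [sub_self, zero_rpow hγ0.ne', sub_zero]
    -- Piece 2
    have piece2 : ∫⁻ s in Ioc a u,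
        ENNReal.ofReal ((t - s) ^ α * |(t - s) ^ β - posPow (u - s) β|)
        ≤ ENNReal.ofReal (d ^ (α+β+1)) + ENNReal.ofReal (2/(β+1) * d ^ (α+β+1)) := by
      have hb : ∀ s ∈ Ioc a u,
          ENNReal.ofReal ((t - s) ^ α * |(t - s) ^ β - posPow (u - s) β|)
            ≤ ENNReal.ofReal (d ^ (α+β)) + ENNReal.ofReal (2 * d ^ α * (u - s) ^ β) := by
        intro s hs
        have hs0 : 0 < s := lt_of_le_of_lt ha0 hs.1
        have hus : 0 ≤ u - s := by linarith [hs.2]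
        have husd : u - s < d := by
          have h1 : u - d ≤ a := le_max_right _ _
          have := hs.1
          linarith
        have hts1 : d ≤ t - s := by linarith
        have hts2 : t - s ≤ 2 * d := by linarith
        have hts0 : 0 < t - s := lt_of_lt_of_le hd0 hts1
        have hpp : posPow (u - s) β = (u - s) ^ β := by
          unfold posPow
          split_ifs with h
          · rfl
          · have : u - s = 0 := le_antisymm (not_lt.mp h) hus
            rw [this, zero_rpow hβ0.ne]
        have habs : |(t - s) ^ β - posPow (u - s) β| ≤ (t - s) ^ β + (u - s) ^ β := by
          rw [hpp]
          calc |(t - s) ^ β - (u - s) ^ β| ≤ |(t - s) ^ β| + |(u - s) ^ β| := abs_sub _ _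
            _ = (t - s) ^ β + (u - s) ^ β := by
                rw [abs_of_nonneg (rpow_nonneg hts0.le β),
                  abs_of_nonneg (rpow_nonneg hus β)]
        refine le_trans (ENNReal.ofReal_le_ofReal ?_) (ENNReal.ofReal_add_le)
        have e1 : (t - s) ^ α * ((t - s) ^ β + (u - s) ^ β)
            = (t - s) ^ (α+β) + (t - s) ^ α * (u - s) ^ β := by
          rw [rpow_add hts0]; ring
        calc (t - s) ^ α * |(t - s) ^ β - posPow (u - s) β|
            ≤ (t - s) ^ α * ((t - s) ^ β + (u - s) ^ β) :=
              mul_le_mul_of_nonneg_left habs (rpow_nonneg hts0.le α)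
          _ = (t - s) ^ (α+β) + (t - s) ^ α * (u - s) ^ β := e1
          _ ≤ d ^ (α+β) + 2 * d ^ α * (u - s) ^ β := by
              have b1 : (t - s) ^ (α+β) ≤ d ^ (α+β) :=
                rpow_le_rpow_of_nonpos hd0 hts1 hαβ0.le
              have b2 : (t - s) ^ α ≤ 2 * d ^ α := helperB hα1 hd0 hts1 hts2
              have b3 : (0:ℝ) ≤ (u - s) ^ β := rpow_nonneg hus β
              nlinarith [rpow_nonneg hts0.le α]
      calc ∫⁻ s in Ioc a u, ENNReal.ofReal ((t - s) ^ α * |(t - s) ^ β - posPow (u - s) β|)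
          ≤ ∫⁻ s in Ioc a u,
              (ENNReal.ofReal (d ^ (α+β)) + ENNReal.ofReal (2 * d ^ α * (u - s) ^ β)) :=
            setLIntegral_mono' measurableSet_Ioc hb
        _ = (∫⁻ _ in Ioc a u, ENNReal.ofReal (d ^ (α+β)))
              + ∫⁻ s in Ioc a u, ENNReal.ofReal (2 * d ^ α * (u - s) ^ β) :=
            lintegral_add_left measurable_const _
        _ ≤ ENNReal.ofReal (d ^ (α+β+1)) + ENNReal.ofReal (2/(β+1) * d ^ (α+β+1)) := by
            gcongr ?_ + ?_
            · rw [setLIntegral_const, Real.volume_Ioc]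
              calc ENNReal.ofReal (d ^ (α+β)) * ENNReal.ofReal (u - a)
                  ≤ ENNReal.ofReal (d ^ (α+β)) * ENNReal.ofReal d := by
                    gcongr
                    have : u - d ≤ a := le_max_right _ _
                    linarith
                _ = ENNReal.ofReal (d ^ (α+β) * d) :=
                    (ENNReal.ofReal_mul (rpow_nonneg hd0.le _)).symm
                _ = ENNReal.ofReal (d ^ (α+β+1)) := by
                    rw [rpow_add_one hd0.ne']
            · have heq : ∀ s : ℝ, ENNReal.ofReal (2 * d ^ α * (u - s) ^ β)
                  = ENNReal.ofReal (2 * d ^ α) * ENNReal.ofReal ((u - s) ^ β) := fun s =>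
                ENNReal.ofReal_mul (by positivity)
              calc ∫⁻ s in Ioc a u, ENNReal.ofReal (2 * d ^ α * (u - s) ^ β)
                  = ENNReal.ofReal (2 * d ^ α)
                      * ∫⁻ s in Ioc a u, ENNReal.ofReal ((u - s) ^ β) := by
                    simp_rw [heq]
                    exact lintegral_const_mul' _ _ ENNReal.ofReal_ne_top
                _ = ENNReal.ofReal (2 * d ^ α)
                      * ENNReal.ofReal (((u - a) ^ (β+1) - (u - u) ^ (β+1)) / (β+1)) := by
                    rw [lintA hau le_rfl (Or.inl (by linarith))]
                _ ≤ ENNReal.ofReal (2 * d ^ α) * ENNReal.ofReal (d ^ (β+1) / (β+1)) := by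
                    apply mul_le_mul_right
                    apply ENNReal.ofReal_le_ofReal
                    rw [sub_self, zero_rpow (by linarith : β+1 ≠ 0), sub_zero]
                    have hr : (u - a) ^ (β+1) ≤ d ^ (β+1) :=
                      rpow_le_rpow (by linarith) (by linarith [le_max_right 0 (u-d)])
                        (by linarith)
                    exact div_le_div_of_nonneg_right hr (by linarith)
                _ = ENNReal.ofReal (2/(β+1) * d ^ (α+β+1)) := by
                    rw [← ENNReal.ofReal_mul (by positivity)]
                    congr 1
                    rw [show α+β+1 = α+(β+1) by ring, rpow_add hd0 α (β+1)]
                    field_simp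
    -- Piece 1
    have piece1 : ∫⁻ s in Ioc (0:ℝ) a,
        ENNReal.ofReal ((t - s) ^ α * |(t - s) ^ β - posPow (u - s) β|)
        ≤ ENNReal.ofReal (2*(-β)/(-(α+β)) * d ^ (α+β+1)) := by
      rcases eq_or_lt_of_le hu0 with hu | hu
      · -- u = 0, region empty
        have haz : a = 0 := by
          rw [ha]
          apply max_eq_left
          rw [← hu]
          linarith
        rw [haz, Ioc_self]
        simp
      · -- 0 < u
        have hb : ∀ s ∈ Ioc (0:ℝ) a,
            ENNReal.ofReal ((t - s) ^ α * |(t - s) ^ β - posPow (u - s) β|)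
              ≤ ENNReal.ofReal ((2*(-β)*d) * (u - s) ^ (α+β-1)) := by
          intro s hs
          have hs0 : 0 < s := hs.1
          have hsa : s ≤ a := hs.2
          have hud : 0 < u - d := by
            by_contra h
            push_neg at h
            have : a = 0 := max_eq_left (by linarith)
            rw [this] at hsa
            linarith
          have haud : a = u - d := max_eq_right hud.le
          have hsud : s ≤ u - d := by rw [← haud]; exact hsa
          have hus : d ≤ u - s := by linarith
          have hus0 : 0 < u - s := lt_of_lt_of_le hd0 hus
          have hts : t - s = (u - s) + d := by rw [hd]; ring
          have hts0 : 0 < t - s := by linarith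
          have hts2 : t - s ≤ 2 * (u - s) := by linarith
          have hpp : posPow (u - s) β = (u - s) ^ β := if_pos hus0
          have hmono : (t - s) ^ β ≤ (u - s) ^ β :=
            rpow_le_rpow_of_nonpos hus0 (by linarith) hβ0.le
          have habs : |(t - s) ^ β - posPow (u - s) β| = (u - s) ^ β - (t - s) ^ β := by
            rw [hpp, abs_of_nonpos (by linarith), neg_sub]
          have hbern : (u - s) ^ β - (t - s) ^ β ≤ (-β) * d * (u - s) ^ (β - 1) := by
            have := bern hβ0 hus0 hd0.le
            rwa [← hts] at this
          apply ENNReal.ofReal_le_ofReal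
          rw [habs]
          have hB : (t - s) ^ α ≤ 2 * (u - s) ^ α := helperB hα1 hus0 (by linarith) hts2
          calc (t - s) ^ α * ((u - s) ^ β - (t - s) ^ β)
              ≤ (2 * (u - s) ^ α) * ((-β) * d * (u - s) ^ (β - 1)) := by
                apply mul_le_mul hB hbern (by linarith) (by positivity)
            _ = (2*(-β)*d) * ((u - s) ^ α * (u - s) ^ (β - 1)) := by ring
            _ = (2*(-β)*d) * (u - s) ^ (α+β-1) := by
                rw [← rpow_add hus0 α (β - 1)]
                ring_nf
        have hK : (0:ℝ) ≤ 2*(-β)*d := by nlinarith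
        have hau' : a < u := by
          rcases le_or_gt (u - d) 0 with h | h
          · rw [ha, max_eq_left (by linarith)]; exact hu
          · rw [ha, max_eq_right (by linarith)]; linarith
        calc ∫⁻ s in Ioc (0:ℝ) a,
            ENNReal.ofReal ((t - s) ^ α * |(t - s) ^ β - posPow (u - s) β|)
            ≤ ∫⁻ s in Ioc (0:ℝ) a, ENNReal.ofReal ((2*(-β)*d) * (u - s) ^ (α+β-1)) :=
              setLIntegral_mono' measurableSet_Ioc hb
          _ = ENNReal.ofReal (2*(-β)*d)
                * ∫⁻ s in Ioc (0:ℝ) a, ENNReal.ofReal ((u - s) ^ (α+β-1)) := by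
              simp_rw [fun s : ℝ => ENNReal.ofReal_mul (p := 2*(-β)*d)
                (q := (u - s) ^ (α+β-1)) hK]
              exact lintegral_const_mul' _ _ ENNReal.ofReal_ne_top
          _ = ENNReal.ofReal (2*(-β)*d)
                * ENNReal.ofReal (((u - 0) ^ (α+β-1+1) - (u - a) ^ (α+β-1+1)) / (α+β-1+1)) := by
              rw [lintA ha0 hau (Or.inr ⟨by intro h; linarith, hau'⟩)]
          _ ≤ ENNReal.ofReal (2*(-β)*d) * ENNReal.ofReal (d ^ (α+β) / (-(α+β))) := by
              apply mul_le_mul_right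
              apply ENNReal.ofReal_le_ofReal
              have hrw : α+β-1+1 = α+β := by ring
              rw [hrw]
              have hne : α+β ≠ 0 := by linarith
              have hflip : ((u - 0) ^ (α+β) - (u - a) ^ (α+β)) / (α+β)
                  = ((u - a) ^ (α+β) - (u - 0) ^ (α+β)) / (-(α+β)) := by
                rw [div_neg, ← neg_div, neg_sub]
              rw [hflip]
              refine div_le_div_of_nonneg_right ?_ (by linarith)
              have hua : (u - a) ^ (α+β) - (u - 0) ^ (α+β) ≤ d ^ (α+β) := by
                rcases le_or_gt (u - d) 0 with h | h
                · rw [ha, max_eq_left (by linarith)]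
                  simp only [sub_zero, sub_self]
                  exact rpow_nonneg hd0.le _
                · rw [ha, max_eq_right (by linarith)]
                  have h1 : u - (u - d) = d := by ring
                  rw [h1, sub_zero]
                  have h2 : (0:ℝ) ≤ u ^ (α+β) := rpow_nonneg hu.le _
                  linarith
              exact hua
          _ = ENNReal.ofReal (2*(-β)/(-(α+β)) * d ^ (α+β+1)) := by
              rw [← ENNReal.ofReal_mul hK]
              congr 1
              rw [rpow_add_one hd0.ne']
              field_simp
    -- Assemble
    have hsplit : ∫⁻ s in Ioc (0:ℝ) t,
        ENNReal.ofReal ((t - s) ^ α * |(t - s) ^ β - posPow (u - s) β|)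
        = (∫⁻ s in Ioc (0:ℝ) a,
            ENNReal.ofReal ((t - s) ^ α * |(t - s) ^ β - posPow (u - s) β|))
          + (∫⁻ s in Ioc a u,
            ENNReal.ofReal ((t - s) ^ α * |(t - s) ^ β - posPow (u - s) β|))
          + ∫⁻ s in Ioc u t,
            ENNReal.ofReal ((t - s) ^ α * |(t - s) ^ β - posPow (u - s) β|) := by
      rw [← Ioc_union_Ioc_eq_Ioc hu0 hut,
        lintegral_union measurableSet_Ioc (Ioc_disjoint_Ioc_of_le le_rfl),
        ← Ioc_union_Ioc_eq_Ioc ha0 hau,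
        lintegral_union measurableSet_Ioc (Ioc_disjoint_Ioc_of_le le_rfl)]
    rw [hsplit]
    have hdε : d ^ (α+β+1) ≤ ε ^ (α+β+1) := rpow_le_rpow hd0.le hδε hγ0.le
    have hdnn : (0:ℝ) ≤ d ^ (α+β+1) := rpow_nonneg hd0.le _
    calc _ ≤ (ENNReal.ofReal (2*(-β)/(-(α+β)) * d ^ (α+β+1)))
          + (ENNReal.ofReal (d ^ (α+β+1)) + ENNReal.ofReal (2/(β+1) * d ^ (α+β+1)))
          + ENNReal.ofReal (d ^ (α+β+1) / (α+β+1)) :=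
        add_le_add (add_le_add piece1 piece2) piece3
      _ = ENNReal.ofReal (2*(-β)/(-(α+β)) * d ^ (α+β+1) + d ^ (α+β+1)
            + 2/(β+1) * d ^ (α+β+1) + d ^ (α+β+1) / (α+β+1)) := by
          have h1 : (0:ℝ) ≤ 2*(-β)/(-(α+β)) * d ^ (α+β+1) :=
            mul_nonneg (div_nonneg (by linarith) (by linarith)) hdnn
          have h3 : (0:ℝ) ≤ 2/(β+1) * d ^ (α+β+1) :=
            mul_nonneg (div_nonneg (by norm_num) (by linarith)) hdnn
          have h4 : (0:ℝ) ≤ d ^ (α+β+1) / (α+β+1) := div_nonneg hdnn (by linarith)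
          rw [← ENNReal.ofReal_add hdnn h3, ← ENNReal.ofReal_add h1 (by linarith),
            ← ENNReal.ofReal_add (by linarith) h4]
          congr 1
          ring
      _ ≤ ENNReal.ofReal ((2*(-β)/(-(α+β)) + 1 + 2/(β+1) + 1/(α+β+1)) * ε ^ (α+β+1)) := by
          apply ENNReal.ofReal_le_ofReal
          have hsum : 2*(-β)/(-(α+β)) * d ^ (α+β+1) + d ^ (α+β+1)
              + 2/(β+1) * d ^ (α+β+1) + d ^ (α+β+1) / (α+β+1)
              = (2*(-β)/(-(α+β)) + 1 + 2/(β+1) + 1/(α+β+1)) * d ^ (α+β+1) := by ring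
          rw [hsum]
          exact mul_le_mul_of_nonneg_left hdε hC0

/-- First half of Lemma 1:
`∫₀¹∫₀ᵗ (t-s)^α |k_n(s,t)| ds dt ≤ C n^{-α-H-1/2}`. -/
theorem lemma1_first (H α : ℝ) (hH : H ∈ Ioo (0 : ℝ) (1/2))
    (hα : α ∈ Ioo (-(1/2) - H) (1/2 - H)) :
    ∃ C : ℝ, 0 < C ∧ ∀ n : ℕ, 0 < n →
      (∫⁻ t in Ioc (0 : ℝ) 1, ∫⁻ s in Ioc (0 : ℝ) t,
          ENNReal.ofReal ((t - s) ^ α * |kn H n s t|))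
        ≤ ENNReal.ofReal (C * (n : ℝ) ^ (-α - H - 1/2)) := by
  obtain ⟨hH1, hH2⟩ := hH
  obtain ⟨hα1, hα2⟩ := hα
  set β : ℝ := H - 1/2 with hβ
  refine ⟨2*(-β)/(-(α+β)) + 1 + 2/(β+1) + 1/(α+β+1), ?_, ?_⟩
  · have h1 : (0:ℝ) < 2*(-β)/(-(α+β)) :=
      div_pos (by rw [hβ]; linarith) (by rw [hβ]; linarith)
    have h2 : (0:ℝ) < 2/(β+1) := div_pos (by norm_num) (by rw [hβ]; linarith)
    have h3 : (0:ℝ) < 1/(α+β+1) := div_pos (by norm_num) (by rw [hβ]; linarith)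
    linarith
  · intro n hn
    have hnR : (0:ℝ) < n := Nat.cast_pos.mpr hn
    have hexp : ((n:ℝ)⁻¹) ^ (α+β+1) = (n:ℝ) ^ (-α - H - 1/2) := by
      rw [inv_rpow hnR.le, ← rpow_neg hnR.le]
      congr 1
      rw [hβ]; ring
    calc ∫⁻ t in Ioc (0 : ℝ) 1, ∫⁻ s in Ioc (0 : ℝ) t,
          ENNReal.ofReal ((t - s) ^ α * |kn H n s t|)
        ≤ ∫⁻ _ in Ioc (0 : ℝ) 1, ENNReal.ofReal
            ((2*(-β)/(-(α+β)) + 1 + 2/(β+1) + 1/(α+β+1)) * ((n:ℝ)⁻¹) ^ (α+β+1)) := by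
          apply setLIntegral_mono' measurableSet_Ioc
          intro t ht
          have ht0 : 0 < t := ht.1
          have hu0 : 0 ≤ (⌊(n : ℝ) * t⌋ : ℝ) / n :=
            div_nonneg (by exact_mod_cast Int.floor_nonneg.mpr (by positivity)) hnR.le
          have hut : (⌊(n : ℝ) * t⌋ : ℝ) / n ≤ t := by
            rw [div_le_iff₀ hnR]
            calc ((⌊(n : ℝ) * t⌋ : ℝ)) ≤ (n:ℝ) * t := Int.floor_le _
              _ = t * n := by ring
          have hδε : t - (⌊(n : ℝ) * t⌋ : ℝ) / n ≤ (n:ℝ)⁻¹ := by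
            have h := Int.lt_floor_add_one ((n : ℝ) * t)
            have hsum : (n:ℝ)⁻¹ + (⌊(n:ℝ)*t⌋:ℝ)/n = ((⌊(n:ℝ)*t⌋:ℝ) + 1)/n := by
              field_simp
              ring
            rw [sub_le_iff_le_add, hsum, le_div_iff₀ hnR]
            nlinarith [h]
          have := inner_abstract α β t ((⌊(n : ℝ) * t⌋ : ℝ) / n) ((n:ℝ)⁻¹)
            (by rw [hβ]; linarith) (by rw [hβ]; linarith) (by rw [hβ]; linarith)
            (by rw [hβ]; linarith) (by linarith) ht0 hu0 hut hδε
          simpa [kn, hβ] using this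
      _ = ENNReal.ofReal ((2*(-β)/(-(α+β)) + 1 + 2/(β+1) + 1/(α+β+1))
            * (n : ℝ) ^ (-α - H - 1/2)) := by
          rw [setLIntegral_const, Real.volume_Ioc, hexp]
          norm_num
end

section
/- Let H ∈ (0,1/2) and α ∈ (−1/2−H, 1/2−H). Then there exists a constant C > 0 such that for every positive integer n, ∫₀¹ ∫₀ᵗ (⌊nt⌋/n − s)_+^α |k_n(s,t)| ds dt ≤ C · n^{−α−H−1/2}, where k_n(s,t) = (t−s)^{H−1/2} − (⌊nt⌋/n − s)_+^{H−1/2}. -/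
open MeasureTheory Real Set intervalIntegral

/-- Bernoulli-type mean value bound. -/
lemma bern_aux {β a b : ℝ} (hβ1 : -1 ≤ β) (hβ0 : β ≤ 0) (ha : 0 < a) (hab : a ≤ b) :
    a ^ β - b ^ β ≤ (-β) * (b - a) * a ^ (β - 1) := by
  set γ := -β with hγ
  have hγ0 : 0 ≤ γ := by simp [hγ]; linarith
  have hγ1 : γ ≤ 1 := by simp [hγ]; linarith
  set h := (b - a) / a with hh
  have hh0 : 0 ≤ h := div_nonneg (by linarith) ha.le
  have hb : b = a * (1 + h) := by rw [hh]; field_simp; ring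
  have h1h : (0:ℝ) < 1 + h := by linarith
  have e1 : (1 + h) ^ γ ≤ 1 + γ * h := rpow_one_add_le_one_add_mul_self (by linarith) hγ0 hγ1
  have hpos : 0 < (1 + h) ^ γ := rpow_pos_of_pos h1h γ
  have e2 : 1 - γ * h ≤ ((1 + h) ^ γ)⁻¹ := by
    rcases le_or_gt (1 - γ * h) 0 with hc | hc
    · exact hc.trans (inv_pos.mpr hpos).le
    · have hm : (1 - γ * h) * ((1 + h) ^ γ) ≤ 1 := by nlinarith [mul_le_mul_of_nonneg_left e1 hc.le, sq_nonneg (γ * h)]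
      calc 1 - γ * h = (1 - γ * h) * ((1 + h) ^ γ) * ((1 + h) ^ γ)⁻¹ := by
            field_simp
        _ ≤ 1 * ((1 + h) ^ γ)⁻¹ := mul_le_mul_of_nonneg_right hm (inv_nonneg.mpr hpos.le)
        _ = ((1 + h) ^ γ)⁻¹ := one_mul _
  have e3 : (1 + h) ^ β = ((1 + h) ^ γ)⁻¹ := by
    rw [hγ, ← Real.rpow_neg h1h.le]; ring_nf
  have e4 : 1 - (1 + h) ^ β ≤ γ * h := by rw [e3]; linarith
  have e5 : b ^ β = a ^ β * (1 + h) ^ β := by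
    rw [hb, Real.mul_rpow ha.le h1h.le]
  have e6 : a ^ β - b ^ β = a ^ β * (1 - (1 + h) ^ β) := by rw [e5]; ring
  have e7 : a ^ β * (1 - (1 + h) ^ β) ≤ a ^ β * (γ * h) :=
    mul_le_mul_of_nonneg_left e4 (rpow_nonneg ha.le β)
  have e8 : a ^ β * (γ * h) = γ * (b - a) * a ^ (β - 1) := by
    rw [Real.rpow_sub_one ha.ne', hh]; field_simp
  linarith [e6, e7, e8.symm.le]


lemma aux1 {p : ℝ} (hp : -1 < p) (hp0 : p < 0) (r δ : ℝ) (hδ : 0 ≤ δ) :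
    ∫⁻ s in Ioo (r - δ) r, ENNReal.ofReal ((r - s) ^ p) ≤
      ENNReal.ofReal (δ ^ (p + 1) / (p + 1)) := by
  have hle : r - δ ≤ r := by linarith
  have hii : IntervalIntegrable (fun x => (r - x) ^ p) volume (r - δ) r := by
    have := ((intervalIntegrable_rpow' (a := 0) (b := δ) hp).comp_sub_left r).symm
    simpa using this
  have hInt : IntegrableOn (fun s => (r - s) ^ p) (Ioo (r - δ) r) :=
    ((intervalIntegrable_iff_integrableOn_Ioc_of_le hle).mp hii).mono_set Ioo_subset_Ioc_self
  rw [← ofReal_integral_eq_lintegral_ofReal hInt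
    (ae_restrict_of_forall_mem measurableSet_Ioo fun s hs =>
      rpow_nonneg (by linarith [hs.2]) p)]
  apply ENNReal.ofReal_le_ofReal
  have e1 : ∫ s in Ioo (r - δ) r, (r - s) ^ p = ∫ s in (r - δ)..r, (r - s) ^ p := by
    rw [intervalIntegral.integral_of_le hle, integral_Ioc_eq_integral_Ioo]
  have e2 : ∫ s in (r - δ)..r, (r - s) ^ p = ∫ x in (0:ℝ)..δ, x ^ p := by
    have := intervalIntegral.integral_comp_sub_left (a := r - δ) (b := r)
      (fun x => x ^ p) r
    simpa using this
  rw [e1, e2, integral_rpow (Or.inl hp)]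
  rw [Real.zero_rpow (by linarith : p + 1 ≠ 0)]
  simp


lemma aux2 {p : ℝ} (hp0 : p < 0) (γ r δ : ℝ) (hγ : 0 ≤ γ) (hδ : 0 < δ) :
    ∫⁻ s in Ioc 0 (r - δ), ENNReal.ofReal (γ * δ * (r - s) ^ (p - 1)) ≤
      ENNReal.ofReal (γ / (-p) * δ ^ (p + 1)) := by
  have hrhs : 0 ≤ γ / (-p) * δ ^ (p + 1) :=
    mul_nonneg (div_nonneg hγ (by linarith)) (rpow_nonneg hδ.le _)
  rcases le_or_gt (r - δ) 0 with h | h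
  · rw [Ioc_eq_empty (by exact not_lt.mpr h)]
    simp [ENNReal.ofReal_le_ofReal hrhs]
  · -- here 0 < r - δ, so δ < r
    have hδr : δ < r := by linarith
    have hcont : ContinuousOn (fun s => γ * δ * (r - s) ^ (p - 1)) (Icc 0 (r - δ)) := by
      apply ContinuousOn.mul continuousOn_const
      apply ContinuousOn.rpow_const (continuousOn_const.sub continuousOn_id)
      intro s hs
      exact Or.inl (by simp only [Pi.sub_apply, id]; intro hc; nlinarith [hs.2])
    have hInt : IntegrableOn (fun s => γ * δ * (r - s) ^ (p - 1)) (Ioc 0 (r - δ)) :=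
      (hcont.integrableOn_compact isCompact_Icc).mono_set Ioc_subset_Icc_self
    rw [← ofReal_integral_eq_lintegral_ofReal hInt
      (ae_restrict_of_forall_mem measurableSet_Ioc fun s hs =>
        mul_nonneg (mul_nonneg hγ hδ.le) (rpow_nonneg (by linarith [hs.2]) _))]
    apply ENNReal.ofReal_le_ofReal
    have e1 : ∫ s in Ioc 0 (r - δ), γ * δ * (r - s) ^ (p - 1)
        = γ * δ * ∫ s in (0:ℝ)..(r - δ), (r - s) ^ (p - 1) := by
      rw [intervalIntegral.integral_of_le h.le, ← MeasureTheory.integral_const_mul]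
    have e2 : ∫ s in (0:ℝ)..(r - δ), (r - s) ^ (p - 1) = ∫ x in δ..r, x ^ (p - 1) := by
      have := intervalIntegral.integral_comp_sub_left (a := (0:ℝ)) (b := r - δ)
        (fun x => x ^ (p - 1)) r
      simpa using this
    have hnot : (0:ℝ) ∉ Set.uIcc δ r := by
      rw [Set.uIcc_of_le hδr.le]
      intro hc
      exact absurd hc.1 (not_le.mpr hδ)
    rw [e1, e2, integral_rpow (Or.inr ⟨by linarith, hnot⟩)]
    have hsimp : p - 1 + 1 = p := by ring
    rw [hsimp]
    have hrp : 0 ≤ r ^ p := rpow_nonneg (by linarith) p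
    have hbound : (r ^ p - δ ^ p) / p ≤ δ ^ p / (-p) := by
      have heq : (r ^ p - δ ^ p) / p = (δ ^ p - r ^ p) / (-p) := by
        rw [div_neg, ← neg_div, neg_sub]
      rw [heq]
      gcongr
      · linarith
      · linarith
    calc γ * δ * ((r ^ p - δ ^ p) / p) ≤ γ * δ * (δ ^ p / (-p)) :=
          mul_le_mul_of_nonneg_left hbound (mul_nonneg hγ hδ.le)
      _ = γ / (-p) * δ ^ (p + 1) := by
          rw [Real.rpow_add_one hδ.ne' p]; field_simp


/-- Inner integral bound for a fixed `t`. -/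
lemma inner_bound {H α β p r δ : ℝ} (hβ : β = H - 1/2) (hp : p = α + β)
    (hβ1 : -1/2 < β) (hβ0 : β < 0) (hp1 : -1 < p) (hp0 : p < 0)
    {n : ℕ} {t : ℝ} (ht0 : 0 < t)
    (hr : r = (⌊(n : ℝ) * t⌋ : ℝ) / n) (hδ : δ = t - r)
    (hr0 : 0 ≤ r) (hrt : r ≤ t) :
    (∫⁻ s in Ioc (0 : ℝ) t,
        ENNReal.ofReal (posPow (r - s) α * |kn H n s t|)) ≤
      ENNReal.ofReal ((1/(p+1) + (-β)/(-p)) * δ ^ (p + 1)) := by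
  have hδ0 : 0 ≤ δ := by rw [hδ]; linarith
  set g₁ : ℝ → ℝ := (Ioo (r - δ) r).indicator (fun s => (r - s) ^ p) with hg₁
  set g₂ : ℝ → ℝ := (Ioc 0 (r - δ)).indicator (fun s => (-β) * δ * (r - s) ^ (p - 1)) with hg₂
  -- pointwise bound
  have hpt : ∀ s ∈ Ioc (0 : ℝ) t,
      posPow (r - s) α * |kn H n s t| ≤ g₁ s + g₂ s := by
    intro s hs
    have hg₁nn : 0 ≤ g₁ s := by
      apply Set.indicator_nonneg
      intro x hx
      exact rpow_nonneg (by linarith [hx.2]) p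
    have hg₂nn : 0 ≤ g₂ s := by
      apply Set.indicator_nonneg
      intro x hx
      exact mul_nonneg (mul_nonneg (by linarith) hδ0) (rpow_nonneg (by linarith [hx.2]) _)
    rcases le_or_gt r s with hsr | hsr
    · -- integrand vanishes
      have : posPow (r - s) α = 0 := by
        rw [posPow, if_neg (by linarith)]
      rw [this, zero_mul]
      positivity
    · -- 0 < s < r
      have hrs : 0 < r - s := by linarith
      have hts : 0 < t - s := by linarith
      have hpp : posPow (r - s) α = (r - s) ^ α := if_pos hrs
      have hppβ : posPow (r - s) (H - 1/2) = (r - s) ^ β := by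
        rw [posPow, if_pos hrs, hβ]
      have hknle : (t - s) ^ β ≤ (r - s) ^ β :=
        rpow_le_rpow_of_nonpos hrs (by linarith) hβ0.le
      have habs : |kn H n s t| = (r - s) ^ β - (t - s) ^ β := by
        rw [kn, ← hr, hppβ, hβ.symm, abs_of_nonpos (by linarith), neg_sub]
      rcases le_or_gt s (r - δ) with hcase | hcase
      · -- use the mean value bound, g₂
        have hbern : (r - s) ^ β - (t - s) ^ β ≤ (-β) * δ * (r - s) ^ (β - 1) := by
          have := bern_aux (a := r - s) (b := t - s) (by linarith) hβ0.le hrs (by linarith)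
          have hsub : t - s - (r - s) = δ := by rw [hδ]; ring
          calc (r - s) ^ β - (t - s) ^ β ≤ (-β) * (t - s - (r - s)) * (r - s) ^ (β - 1) := this
            _ = (-β) * δ * (r - s) ^ (β - 1) := by rw [hsub]
        have hfle : posPow (r - s) α * |kn H n s t| ≤ (-β) * δ * (r - s) ^ (p - 1) := by
          rw [hpp, habs]
          calc (r - s) ^ α * ((r - s) ^ β - (t - s) ^ β)
              ≤ (r - s) ^ α * ((-β) * δ * (r - s) ^ (β - 1)) :=
                mul_le_mul_of_nonneg_left hbern (rpow_nonneg hrs.le α)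
            _ = (-β) * δ * (r - s) ^ (p - 1) := by
                rw [hp, show α + β - 1 = α + (β - 1) by ring, Real.rpow_add hrs]
                ring
        have hg₂ : g₂ s = (-β) * δ * (r - s) ^ (p - 1) :=
          Set.indicator_of_mem (show s ∈ Ioc (0:ℝ) (r - δ) from ⟨hs.1, hcase⟩) _
        linarith
      · -- use the crude bound, g₁
        have hfle : posPow (r - s) α * |kn H n s t| ≤ (r - s) ^ p := by
          rw [hpp, habs]
          calc (r - s) ^ α * ((r - s) ^ β - (t - s) ^ β)
              ≤ (r - s) ^ α * (r - s) ^ β :=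
                mul_le_mul_of_nonneg_left (by linarith [rpow_nonneg hts.le β])
                  (rpow_nonneg hrs.le α)
            _ = (r - s) ^ p := by rw [hp, Real.rpow_add hrs]
        have hg₁ : g₁ s = (r - s) ^ p :=
          Set.indicator_of_mem (show s ∈ Ioo (r - δ) r from ⟨hcase, hsr⟩) _
        linarith
    -- end pointwise
  have hmeas₁ : Measurable fun s => ENNReal.ofReal (g₁ s) := by
    apply ENNReal.measurable_ofReal.comp
    exact Measurable.indicator (by fun_prop) measurableSet_Ioo
  have hmeas₂ : Measurable fun s => ENNReal.ofReal (g₂ s) := by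
    apply ENNReal.measurable_ofReal.comp
    exact Measurable.indicator (by fun_prop) measurableSet_Ioc
  calc (∫⁻ s in Ioc (0 : ℝ) t, ENNReal.ofReal (posPow (r - s) α * |kn H n s t|))
      ≤ ∫⁻ s in Ioc (0 : ℝ) t, (ENNReal.ofReal (g₁ s) + ENNReal.ofReal (g₂ s)) := by
        apply setLIntegral_mono' measurableSet_Ioc
        intro s hs
        exact le_trans (ENNReal.ofReal_le_ofReal (hpt s hs)) (ENNReal.ofReal_add_le)
    _ = (∫⁻ s in Ioc (0 : ℝ) t, ENNReal.ofReal (g₁ s))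
        + ∫⁻ s in Ioc (0 : ℝ) t, ENNReal.ofReal (g₂ s) :=
        lintegral_add_left (hmeas₁) _
    _ ≤ (∫⁻ s, ENNReal.ofReal (g₁ s)) + ∫⁻ s, ENNReal.ofReal (g₂ s) := by
        gcongr <;> exact Measure.restrict_le_self
    _ ≤ ENNReal.ofReal (δ ^ (p+1) / (p+1)) + ENNReal.ofReal ((-β) / (-p) * δ ^ (p + 1)) := by
        gcongr
        · -- g₁ part
          have : (fun s => ENNReal.ofReal (g₁ s))
              = (Ioo (r - δ) r).indicator (fun s => ENNReal.ofReal ((r - s) ^ p)) := by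
            funext s
            rw [hg₁]
            by_cases hsmem : s ∈ Ioo (r - δ) r
            · rw [Set.indicator_of_mem hsmem, Set.indicator_of_mem hsmem]
            · rw [Set.indicator_of_notMem hsmem, Set.indicator_of_notMem hsmem,
                ENNReal.ofReal_zero]
          rw [this, lintegral_indicator measurableSet_Ioo]
          exact aux1 hp1 hp0 r δ hδ0
        · -- g₂ part
          have hrw : (fun s => ENNReal.ofReal (g₂ s))
              = (Ioc 0 (r - δ)).indicator
                  (fun s => ENNReal.ofReal ((-β) * δ * (r - s) ^ (p - 1))) := by
            funext s
            rw [hg₂]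
            by_cases hsmem : s ∈ Ioc (0:ℝ) (r - δ)
            · rw [Set.indicator_of_mem hsmem, Set.indicator_of_mem hsmem]
            · rw [Set.indicator_of_notMem hsmem, Set.indicator_of_notMem hsmem,
                ENNReal.ofReal_zero]
          rw [hrw, lintegral_indicator measurableSet_Ioc]
          rcases eq_or_lt_of_le hδ0 with hδeq | hδpos
          · simp only [← hδeq, mul_zero, zero_mul, ENNReal.ofReal_zero, lintegral_zero]
            exact zero_le'
          · exact aux2 hp0 (-β) r δ (by linarith) hδpos
    _ ≤ ENNReal.ofReal ((1/(p+1) + (-β)/(-p)) * δ ^ (p + 1)) := by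
        rw [← ENNReal.ofReal_add (div_nonneg (rpow_nonneg hδ0 _) (by linarith))
          (mul_nonneg (div_nonneg (by linarith) (by linarith)) (rpow_nonneg hδ0 _))]
        apply ENNReal.ofReal_le_ofReal
        have : δ ^ (p+1) / (p+1) + (-β) / (-p) * δ ^ (p + 1)
            = (1/(p+1) + (-β)/(-p)) * δ ^ (p + 1) := by ring
        linarith [this.le]


/-- Second half of Lemma 1:
`∫₀¹∫₀ᵗ (⌊nt⌋/n - s)_+^α |k_n(s,t)| ds dt ≤ C n^{-α-H-1/2}`. -/
theorem lemma1_second (H α : ℝ) (hH : H ∈ Ioo (0 : ℝ) (1/2))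
    (hα : α ∈ Ioo (-(1/2) - H) (1/2 - H)) :
    ∃ C : ℝ, 0 < C ∧ ∀ n : ℕ, 0 < n →
      (∫⁻ t in Ioc (0 : ℝ) 1, ∫⁻ s in Ioc (0 : ℝ) t,
          ENNReal.ofReal (posPow ((⌊(n : ℝ) * t⌋ : ℝ) / n - s) α * |kn H n s t|))
        ≤ ENNReal.ofReal (C * (n : ℝ) ^ (-α - H - 1/2)) := by
  obtain ⟨hH0, hH1⟩ := hH
  obtain ⟨hα1, hα2⟩ := hα
  set β := H - 1/2 with hβ
  set p := α + β with hp
  have hβ1 : -1/2 < β := by rw [hβ]; linarith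
  have hβ0 : β < 0 := by rw [hβ]; linarith
  have hp1 : -1 < p := by rw [hp, hβ]; linarith
  have hp0 : p < 0 := by rw [hp, hβ]; linarith
  set C₀ : ℝ := 1/(p+1) + (-β)/(-p) with hC₀
  have hC₀pos : 0 < C₀ := by
    apply add_pos_of_pos_of_nonneg
    · apply div_pos one_pos; linarith
    · exact div_nonneg (by linarith) (by linarith)
  refine ⟨C₀, hC₀pos, fun n hn => ?_⟩
  have hnpos : (0:ℝ) < n := Nat.cast_pos.mpr hn
  have key : ∀ t ∈ Ioc (0:ℝ) 1,
      (∫⁻ s in Ioc (0 : ℝ) t,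
          ENNReal.ofReal (posPow ((⌊(n : ℝ) * t⌋ : ℝ) / n - s) α * |kn H n s t|))
        ≤ ENNReal.ofReal (C₀ * ((n:ℝ)⁻¹) ^ (p + 1)) := by
    intro t ht
    set r : ℝ := (⌊(n : ℝ) * t⌋ : ℝ) / n with hr
    set δ : ℝ := t - r with hδ
    have hr0 : 0 ≤ r := by
      rw [hr]
      apply div_nonneg _ hnpos.le
      exact_mod_cast Int.floor_nonneg.mpr (mul_nonneg hnpos.le ht.1.le)
    have hrt : r ≤ t := by
      rw [hr, div_le_iff₀ hnpos]
      calc ((⌊(n : ℝ) * t⌋ : ℝ)) ≤ (n : ℝ) * t := Int.floor_le _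
        _ = t * n := by ring
    have hδn : δ ≤ (n:ℝ)⁻¹ := by
      rw [hδ, hr, sub_le_iff_le_add, inv_eq_one_div, ← add_div, le_div_iff₀ hnpos]
      nlinarith [Int.lt_floor_add_one ((n:ℝ) * t)]
    have hbound := inner_bound (H := H) (α := α) hβ hp hβ1 hβ0 hp1 hp0 ht.1 hr hδ hr0 hrt
    refine hbound.trans (ENNReal.ofReal_le_ofReal ?_)
    apply mul_le_mul_of_nonneg_left _ hC₀pos.le
    apply Real.rpow_le_rpow (by rw [hδ]; linarith) hδn (by linarith)
  calc (∫⁻ t in Ioc (0 : ℝ) 1, ∫⁻ s in Ioc (0 : ℝ) t,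
          ENNReal.ofReal (posPow ((⌊(n : ℝ) * t⌋ : ℝ) / n - s) α * |kn H n s t|))
      ≤ ∫⁻ _t in Ioc (0 : ℝ) 1, ENNReal.ofReal (C₀ * ((n:ℝ)⁻¹) ^ (p + 1)) :=
        setLIntegral_mono' measurableSet_Ioc key
    _ = ENNReal.ofReal (C₀ * ((n:ℝ)⁻¹) ^ (p + 1)) * volume (Ioc (0:ℝ) 1) :=
        setLIntegral_const _ _
    _ = ENNReal.ofReal (C₀ * ((n:ℝ)⁻¹) ^ (p + 1)) := by
        rw [Real.volume_Ioc]
        norm_num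
    _ = ENNReal.ofReal (C₀ * (n : ℝ) ^ (-α - H - 1/2)) := by
        congr 1
        rw [Real.inv_rpow hnpos.le, ← Real.rpow_neg hnpos.le]
        congr 1
        rw [hp, hβ]; ring
end

section
/- Let H ∈ (0,1/2) and α < 1/2 − H. Then ∫₂^∞ u^α |u^{H−1/2} − (u−1)^{H−1/2}| du ≤ 2^{1+α} / ((1/2 − H)(1/2 − α − H)). -/
open MeasureTheory Real Set

/-- Pointwise bound via MVT. -/
lemma ptwise (H α : ℝ) (hH : H ∈ Ioo (0 : ℝ) (1/2)) {u : ℝ} (hu : 2 < u) :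
    u ^ α * |u ^ (H - 1/2) - (u - 1) ^ (H - 1/2)|
      ≤ (1/2 - H) * 2 ^ (3/2 - H) * u ^ (α + H - 3/2) := by
  obtain ⟨hH0, hH1⟩ := hH
  have hq0 : H - 1/2 < 0 := by linarith
  have ha0 : (0 : ℝ) < u - 1 := by linarith
  have hu0 : (0 : ℝ) < u := by linarith
  -- MVT
  obtain ⟨c, hc, hceq⟩ := exists_hasDerivAt_eq_slope (fun x => x ^ (H - 1/2))
    (fun x => (H - 1/2) * x ^ (H - 1/2 - 1)) (by linarith : u - 1 < u)
    (continuousOn_id.rpow_const (fun x hx =>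
      Or.inl (ne_of_gt (by have := hx.1; simp only [id_eq]; linarith))))
    (fun x hx => hasDerivAt_rpow_const (Or.inl (ne_of_gt (by have := hx.1; linarith))))
  have hc0 : 0 < c := lt_trans ha0 hc.1
  rw [show u - (u - 1) = 1 by ring, div_one] at hceq
  have habs : |u ^ (H - 1/2) - (u - 1) ^ (H - 1/2)|
      = (1/2 - H) * c ^ (H - 1/2 - 1) := by
    rw [abs_of_nonpos (by
      have : u ^ (H - 1/2) ≤ (u - 1) ^ (H - 1/2) :=
        rpow_le_rpow_of_nonpos ha0 (by linarith) hq0.le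
      linarith)]
    linear_combination hceq
  rw [habs]
  have hcb : c ^ (H - 1/2 - 1) ≤ 2 ^ (3/2 - H) * u ^ (H - 3/2) := by
    have h1 : c ^ (H - 1/2 - 1) ≤ (u / 2) ^ (H - 1/2 - 1) :=
      rpow_le_rpow_of_nonpos (by positivity) (by nlinarith [hc.1]) (by linarith)
    have h2 : (u / 2) ^ (H - 1/2 - 1) = 2 ^ (3/2 - H) * u ^ (H - 3/2) := by
      rw [div_rpow hu0.le (by norm_num), div_eq_mul_inv,
        ← rpow_neg (by norm_num : (0:ℝ) ≤ 2),
        show H - 1/2 - 1 = H - 3/2 by ring, show -(H - 3/2) = 3/2 - H by ring]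
      ring
    linarith [h2 ▸ h1]
  have hα0 : (0:ℝ) ≤ u ^ α := (rpow_pos_of_pos hu0 α).le
  calc u ^ α * ((1/2 - H) * c ^ (H - 1/2 - 1))
      ≤ u ^ α * ((1/2 - H) * (2 ^ (3/2 - H) * u ^ (H - 3/2))) := by
        apply mul_le_mul_of_nonneg_left _ hα0
        exact mul_le_mul_of_nonneg_left hcb (by linarith)
    _ = (1/2 - H) * 2 ^ (3/2 - H) * (u ^ α * u ^ (H - 3/2)) := by ring
    _ = (1/2 - H) * 2 ^ (3/2 - H) * u ^ (α + H - 3/2) := by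
        rw [← rpow_add hu0, show α + (H - 3/2) = α + H - 3/2 by ring]

/-- Tail estimate: for `H ∈ (0,1/2)` and `α < 1/2 - H`,
`∫₂^∞ u^α |u^{H-1/2} - (u-1)^{H-1/2}| du ≤ 2^{1+α} / ((1/2-H)(1/2-α-H))`. -/
theorem tail_estimate (H α : ℝ) (hH : H ∈ Ioo (0 : ℝ) (1/2)) (hα : α < 1/2 - H) :
    (∫⁻ u in Ioi (2 : ℝ),
        ENNReal.ofReal (u ^ α * |u ^ (H - 1/2) - (u - 1) ^ (H - 1/2)|))
      ≤ ENNReal.ofReal ((2 : ℝ) ^ (1 + α) / ((1/2 - H) * (1/2 - α - H))) := by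
  obtain ⟨hH0, hH1⟩ := hH
  set C := (1/2 - H) * 2 ^ (3/2 - H) with hC
  have hC0 : 0 ≤ C := mul_nonneg (by linarith) (by positivity)
  have hp : α + H - 3/2 < -1 := by linarith
  have step1 : (∫⁻ u in Ioi (2 : ℝ),
        ENNReal.ofReal (u ^ α * |u ^ (H - 1/2) - (u - 1) ^ (H - 1/2)|))
      ≤ ∫⁻ u in Ioi (2 : ℝ), ENNReal.ofReal (C * u ^ (α + H - 3/2)) := by
    apply setLIntegral_mono' measurableSet_Ioi
    intro u hu
    exact ENNReal.ofReal_le_ofReal (ptwise H α ⟨hH0, hH1⟩ hu)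
  have hint : IntegrableOn (fun u : ℝ => C * u ^ (α + H - 3/2)) (Ioi 2) :=
    (integrableOn_Ioi_rpow_of_lt hp (by norm_num)).const_mul C
  have step2 : (∫⁻ u in Ioi (2 : ℝ), ENNReal.ofReal (C * u ^ (α + H - 3/2)))
      = ENNReal.ofReal (∫ u in Ioi (2 : ℝ), C * u ^ (α + H - 3/2)) := by
    rw [ofReal_integral_eq_lintegral_ofReal hint]
    filter_upwards [ae_restrict_mem measurableSet_Ioi] with u hu
    have : (0:ℝ) < u := lt_trans (by norm_num) hu
    positivity
  have hval : (∫ u in Ioi (2 : ℝ), C * u ^ (α + H - 3/2))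
      = C * (2 ^ (α + H - 1/2) / (1/2 - α - H)) := by
    rw [integral_const_mul, integral_Ioi_rpow_of_lt hp (by norm_num)]
    rw [show α + H - 3/2 + 1 = α + H - 1/2 by ring,
      show (1/2 - α - H) = -(α + H - 1/2) by ring, div_neg, neg_div]
  have hfinal : C * (2 ^ (α + H - 1/2) / (1/2 - α - H))
      ≤ (2 : ℝ) ^ (1 + α) / ((1/2 - H) * (1/2 - α - H)) := by
    have hd : (0:ℝ) < 1/2 - α - H := by linarith
    have hP : (0:ℝ) < 2 ^ (1 + α) := rpow_pos_of_pos two_pos _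
    have h2 : (2:ℝ) ^ (3/2 - H) * 2 ^ (α + H - 1/2) = 2 ^ (1 + α) := by
      rw [← rpow_add (by norm_num : (0:ℝ) < 2)]
      congr 1; ring
    have hlhs : C * (2 ^ (α + H - 1/2) / (1/2 - α - H))
        = (1/2 - H) * 2 ^ (1 + α) / (1/2 - α - H) := by
      rw [hC, ← h2]; ring
    rw [hlhs, div_le_div_iff₀ hd (mul_pos (by linarith) hd)]
    have hsq : (1/2 - H) * (1/2 - H) ≤ 1 := by nlinarith
    nlinarith [mul_pos hP hd]
  calc _ ≤ _ := step1
    _ = _ := step2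
    _ ≤ _ := by rw [hval]; exact ENNReal.ofReal_le_ofReal hfinal
end

section
/- Let H ∈ (0,1/2) and α ∈ (−1/2−H, 1/2−H). Then ∫₀^∞ u^α |u^{H−1/2} − (u−1)_+^{H−1/2}| du < ∞, where (x)_+^β = x^β for x > 0 and 0 otherwise. -/
open MeasureTheory Real Set

private lemma mvt_bound {p : ℝ} (hp : p ≤ 0) {u : ℝ} (hu : 2 ≤ u) :
    (u - 1) ^ p - u ^ p ≤ (-p) * (u - 1) ^ (p - 1) := by
  have h0 : (0 : ℝ) < u - 1 := by linarith
  have hlt : u - 1 < u := by linarith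
  obtain ⟨c, hc, hderiv⟩ := exists_hasDerivAt_eq_slope (fun x => x ^ p)
    (fun x => p * x ^ (p - 1)) hlt
    (ContinuousOn.rpow_const continuousOn_id (fun x hx =>
      Or.inl (ne_of_gt (lt_of_lt_of_le h0 hx.1))))
    (fun x hx => Real.hasDerivAt_rpow_const (Or.inl (ne_of_gt (h0.trans hx.1))))
  have hc0 : 0 < c := h0.trans hc.1
  have heq : u ^ p - (u - 1) ^ p = p * c ^ (p - 1) := by
    have : u - (u - 1) = 1 := by ring
    rw [hderiv, this, div_one]
  have hr : c ^ (p - 1) ≤ (u - 1) ^ (p - 1) :=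
    Real.rpow_le_rpow_of_nonpos h0 hc.1.le (by linarith)
  nlinarith

/-- For `H ∈ (0,1/2)` and `α ∈ (-1/2-H, 1/2-H)`,
`∫₀^∞ u^α |u^{H-1/2} - (u-1)_+^{H-1/2}| du < ∞`. -/
theorem integral_on_halfline_finite (H α : ℝ) (hH : H ∈ Ioo (0 : ℝ) (1/2))
    (hα : α ∈ Ioo (-(1/2) - H) (1/2 - H)) :
    (∫⁻ u in Ioi (0 : ℝ),
        ENNReal.ofReal (u ^ α * |u ^ (H - 1/2) - posPow (u - 1) (H - 1/2)|)) < ⊤ := by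
  set p : ℝ := H - 1/2 with hpdef
  have hp0 : p < 0 := by rw [hpdef]; linarith [hH.2]
  have hpm1 : -1 < p := by rw [hpdef]; linarith [hH.1]
  set f : ℝ → ℝ := fun u => u ^ α * |u ^ p - posPow (u - 1) p| with hf
  -- the "2^|α|" constant
  have h2a1 : (1 : ℝ) ≤ 2 ^ |α| := by
    rw [show (1:ℝ) = 2 ^ (0:ℝ) by simp]
    exact Real.rpow_le_rpow_of_exponent_le one_le_two (abs_nonneg α)
  -- bound for u^α on (1,2]
  have hua_bound : ∀ u : ℝ, 1 ≤ u → u ≤ 2 → u ^ α ≤ 2 ^ |α| := by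
    intro u h1 h2
    rcases le_or_gt 0 α with hα0 | hα0
    · calc u ^ α ≤ 2 ^ α := Real.rpow_le_rpow (by linarith) h2 hα0
        _ ≤ 2 ^ |α| := Real.rpow_le_rpow_of_exponent_le one_le_two (le_abs_self α)
    · calc u ^ α ≤ 1 := Real.rpow_le_one_of_one_le_of_nonpos h1 hα0.le
        _ ≤ 2 ^ |α| := h2a1
  -- Piece 1 : (0,1]
  have hI1 : IntegrableOn f (Ioc 0 1) := by
    have hint : IntegrableOn (fun u : ℝ => u ^ (α + p)) (Ioc 0 1) := by
      have := intervalIntegral.intervalIntegrable_rpow' (r := α + p)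
        (by rw [hpdef]; linarith [hα.1]) (a := 0) (b := 1)
      rwa [intervalIntegrable_iff_integrableOn_Ioc_of_le (by norm_num)] at this
    apply hint.congr_fun ?_ measurableSet_Ioc
    intro u hu
    have hu0 : 0 < u := hu.1
    have : posPow (u - 1) p = 0 := by
      simp only [posPow, if_neg (by push_neg; linarith [hu.2] : ¬ (0:ℝ) < u - 1)]
    simp only [hf, this, sub_zero, abs_of_nonneg (Real.rpow_nonneg hu0.le p),
      ← Real.rpow_add hu0]
  -- Piece 2 : (1,2]
  have hI2 : IntegrableOn f (Ioc 1 2) := by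
    have hint : IntegrableOn (fun u : ℝ => (u - 1) ^ p) (Ioc 1 2) := by
      have hbase := intervalIntegral.intervalIntegrable_rpow' (r := p) hpm1 (a := 0) (b := 1)
      have h := hbase.comp_sub_right 1
      rw [intervalIntegrable_iff_integrableOn_Ioc_of_le
        (by norm_num : (0+1:ℝ) ≤ 1+1)] at h
      norm_num at h
      exact h
    have hg : IntegrableOn (fun u : ℝ => 2 ^ |α| * (u - 1) ^ p) (Ioc 1 2) :=
      hint.const_mul _
    have haesm : AEStronglyMeasurable (fun u : ℝ => u ^ α * |u ^ p - (u - 1) ^ p|)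
        (volume.restrict (Ioc 1 2)) := by
      apply ContinuousOn.aestronglyMeasurable _ measurableSet_Ioc
      apply ContinuousOn.mul
      · exact ContinuousOn.rpow_const continuousOn_id
          (fun x hx => Or.inl (by intro h; rw [h] at hx; exact absurd hx.1 (by norm_num)))
      · apply ContinuousOn.abs
        apply ContinuousOn.sub
        · exact ContinuousOn.rpow_const continuousOn_id
            (fun x hx => Or.inl (by intro h; rw [h] at hx; exact absurd hx.1 (by norm_num)))
        · exact ContinuousOn.rpow_const (continuousOn_id.sub continuousOn_const)
            (fun x hx => Or.inl (by have := hx.1; intro h; linarith [sub_eq_zero.mp h] ))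
    have hmono : IntegrableOn (fun u : ℝ => u ^ α * |u ^ p - (u - 1) ^ p|) (Ioc 1 2) := by
      apply Integrable.mono' hg haesm
      filter_upwards [ae_restrict_mem measurableSet_Ioc] with u hu
      have hu1 : (1:ℝ) < u := hu.1
      have hu0 : (0:ℝ) < u := by linarith
      have hv0 : (0:ℝ) < u - 1 := by linarith
      have hup : 0 < u ^ p := Real.rpow_pos_of_pos hu0 p
      have hvp : 0 < (u - 1) ^ p := Real.rpow_pos_of_pos hv0 p
      have hua : 0 < u ^ α := Real.rpow_pos_of_pos hu0 α
      rw [Real.norm_eq_abs, abs_of_nonneg (by positivity)]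
      have habs : |u ^ p - (u - 1) ^ p| ≤ (u - 1) ^ p := by
        rw [abs_sub_le_iff]
        have : u ^ p ≤ (u - 1) ^ p :=
          Real.rpow_le_rpow_of_nonpos hv0 (by linarith) hp0.le
        constructor <;> nlinarith
      calc u ^ α * |u ^ p - (u - 1) ^ p| ≤ u ^ α * (u - 1) ^ p := by nlinarith
        _ ≤ 2 ^ |α| * (u - 1) ^ p := by
            have := hua_bound u hu1.le hu.2
            nlinarith
    apply hmono.congr_fun ?_ measurableSet_Ioc
    intro u hu
    have : posPow (u - 1) p = (u - 1) ^ p := by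
      simp only [posPow, if_pos (by linarith [hu.1] : (0:ℝ) < u - 1)]
    simp only [hf, this]
  -- Piece 3 : (2,∞)
  have hI3 : IntegrableOn f (Ioi 2) := by
    set C : ℝ := (-p) * 2 ^ (1 - p) with hC
    have hg : IntegrableOn (fun u : ℝ => C * u ^ (α + p - 1)) (Ioi 2) := by
      apply Integrable.const_mul
      exact integrableOn_Ioi_rpow_of_lt (by rw [hpdef]; linarith [hα.2]) (by norm_num)
    have haesm : AEStronglyMeasurable (fun u : ℝ => u ^ α * |u ^ p - (u - 1) ^ p|)
        (volume.restrict (Ioi 2)) := by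
      apply ContinuousOn.aestronglyMeasurable _ measurableSet_Ioi
      apply ContinuousOn.mul
      · refine ContinuousOn.rpow_const continuousOn_id (fun x hx => Or.inl ?_)
        have h2x : (2:ℝ) < x := hx
        intro h; rw [h] at h2x; norm_num at h2x
      · apply ContinuousOn.abs
        apply ContinuousOn.sub
        · refine ContinuousOn.rpow_const continuousOn_id (fun x hx => Or.inl ?_)
          have h2x : (2:ℝ) < x := hx
          intro h; rw [h] at h2x; norm_num at h2x
        · refine ContinuousOn.rpow_const (continuousOn_id.sub continuousOn_const)
            (fun x hx => Or.inl ?_)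
          have h2x : (2:ℝ) < x := hx
          intro h
          have := sub_eq_zero.mp h
          linarith
    have hmono : IntegrableOn (fun u : ℝ => u ^ α * |u ^ p - (u - 1) ^ p|) (Ioi 2) := by
      apply Integrable.mono' hg haesm
      filter_upwards [ae_restrict_mem measurableSet_Ioi] with u hu
      have hu2 : (2:ℝ) < u := hu
      have hu0 : (0:ℝ) < u := by linarith
      have hv0 : (0:ℝ) < u - 1 := by linarith
      have hua : 0 < u ^ α := Real.rpow_pos_of_pos hu0 α
      rw [Real.norm_eq_abs, abs_of_nonneg (by positivity)]
      have habs : |u ^ p - (u - 1) ^ p| ≤ (-p) * (u - 1) ^ (p - 1) := by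
        have h1 : u ^ p ≤ (u - 1) ^ p :=
          Real.rpow_le_rpow_of_nonpos hv0 (by linarith) hp0.le
        rw [abs_of_nonpos (by linarith), neg_sub]
        exact mvt_bound hp0.le hu2.le
      have hkey : (u - 1) ^ (p - 1) ≤ 2 ^ (1 - p) * u ^ (p - 1) := by
        have h1 : (u / 2 : ℝ) ≤ u - 1 := by linarith
        have h2 : (0:ℝ) < u / 2 := by linarith
        calc (u - 1) ^ (p - 1) ≤ (u / 2) ^ (p - 1) :=
              Real.rpow_le_rpow_of_nonpos h2 h1 (by linarith)
          _ = u ^ (p - 1) / 2 ^ (p - 1) := Real.div_rpow hu0.le (by norm_num : (0:ℝ) ≤ 2) _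
          _ = 2 ^ (1 - p) * u ^ (p - 1) := by
              rw [div_eq_mul_inv, ← Real.rpow_neg (by norm_num : (0:ℝ) ≤ 2)]
              rw [show -(p - 1) = 1 - p by ring]; ring
      have hupm : 0 < u ^ (p - 1) := Real.rpow_pos_of_pos hu0 _
      have hvpm : 0 < (u - 1) ^ (p - 1) := Real.rpow_pos_of_pos hv0 _
      have h2p : (0:ℝ) < 2 ^ (1 - p) := Real.rpow_pos_of_pos (by norm_num) _
      calc u ^ α * |u ^ p - (u - 1) ^ p|
          ≤ u ^ α * ((-p) * (u - 1) ^ (p - 1)) := by nlinarith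
        _ ≤ u ^ α * ((-p) * (2 ^ (1 - p) * u ^ (p - 1))) := by
            have hcm := mul_le_mul_of_nonneg_left hkey
              (le_of_lt (mul_pos hua (neg_pos.mpr hp0)))
            nlinarith
        _ = C * u ^ (α + p - 1) := by
            rw [hC, show α + p - 1 = α + (p - 1) by ring, Real.rpow_add hu0]; ring
    apply hmono.congr_fun ?_ measurableSet_Ioi
    intro u hu
    have hu2 : (2:ℝ) < u := hu
    have : posPow (u - 1) p = (u - 1) ^ p := by
      simp only [posPow, if_pos (by linarith : (0:ℝ) < u - 1)]
    simp only [hf, this]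
  -- combine
  have hunion : IntegrableOn f (Ioi 0) := by
    have h12 : IntegrableOn f (Ioc 0 2) := by
      have := hI1.union hI2
      rwa [Set.Ioc_union_Ioc_eq_Ioc (by norm_num) (by norm_num)] at this
    have := h12.union hI3
    rwa [Set.Ioc_union_Ioi_eq_Ioi (by norm_num)] at this
  exact hunion.setLIntegral_lt_top
end

section
/- Let H ∈ (0,1/2). There exists a constant C > 0 such that for every positive integer n and every b ∈ [0,1], |g_n(b)| ≤ C · n^{−2H}, where g_n(b) = ∫₀¹ ∫₀ᵗ ((1−b)(t−s)^{H−1/2} + b(⌊nt⌋/n − s)_+^{H−1/2}) k_n(s,t) ds dt. -/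
open MeasureTheory Real Set intervalIntegral

/-- `g_n(b) = ∫₀¹∫₀ᵗ ((1-b)(t-s)^{H-1/2} + b(⌊nt⌋/n - s)_+^{H-1/2}) k_n(s,t) ds dt`. -/
noncomputable def gn (H : ℝ) (n : ℕ) (b : ℝ) : ℝ :=
  ∫ t in (0 : ℝ)..1, ∫ s in (0 : ℝ)..t,
    ((1 - b) * (t - s) ^ (H - 1/2)
      + b * posPow ((⌊(n : ℝ) * t⌋ : ℝ) / n - s) (H - 1/2)) * kn H n s t

/-- Integrability of a shifted power. -/
lemma ii_shift {r : ℝ} (hr : -1 < r) (c a e : ℝ) :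
    IntervalIntegrable (fun s => (c - s) ^ r) volume a e := by
  simpa using (intervalIntegrable_rpow' hr (a := c - a) (b := c - e)).comp_sub_left c

/-- Value of the integral of a shifted power. -/
lemma int_shift {r : ℝ} (hr : -1 < r) (c a e : ℝ) :
    ∫ s in a..e, (c - s) ^ r = ((c - a) ^ (r + 1) - (c - e) ^ (r + 1)) / (r + 1) := by
  rw [intervalIntegral.integral_comp_sub_left (fun x => x ^ r) c,
    integral_rpow (Or.inl hr)]

set_option maxHeartbeats 2000000 in
/-- The key pointwise-in-`t` bound on the inner integral. -/
lemma inner_bound_s13 (H : ℝ) (hH0 : 0 < H) (hH2 : H < 1/2) (n : ℕ) (hn : 0 < n)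
    (b : ℝ) (hb0 : 0 ≤ b) (hb1 : b ≤ 1) (t : ℝ) (ht0 : 0 < t) (ht1 : t ≤ 1) :
    |∫ s in (0 : ℝ)..t, ((1 - b) * (t - s) ^ (H - 1/2)
      + b * posPow ((⌊(n : ℝ) * t⌋ : ℝ) / n - s) (H - 1/2)) * kn H n s t|
      ≤ (1 / H) * (n : ℝ) ^ (-(2 * H)) := by
  have hn' : (0 : ℝ) < n := Nat.cast_pos.mpr hn
  set u : ℝ := (⌊(n : ℝ) * t⌋ : ℝ) / n with hu
  have hfl0 : (0 : ℝ) ≤ (⌊(n : ℝ) * t⌋ : ℝ) := by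
    exact_mod_cast Int.floor_nonneg.mpr (by positivity)
  have hu0 : 0 ≤ u := div_nonneg hfl0 hn'.le
  have hut : u ≤ t := by
    rw [hu, div_le_iff₀ hn']
    have := Int.floor_le ((n : ℝ) * t)
    linarith
  have htu : t - u ≤ 1 / n := by
    have h1 : (n : ℝ) * t - 1 < (⌊(n : ℝ) * t⌋ : ℝ) := Int.sub_one_lt_floor _
    have h2 : t - u = ((n : ℝ) * t - (⌊(n : ℝ) * t⌋ : ℝ)) / n := by
      rw [hu]; field_simp
    rw [h2, div_le_div_iff₀ hn' hn']
    nlinarith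
  have hr : (-1 : ℝ) < 2 * (H - 1 / 2) := by linarith
  have h2H : 2 * (H - 1 / 2) + 1 = 2 * H := by ring
  have h2Hpos : (0 : ℝ) < 2 * H := by linarith
  have h2Hne : 2 * H ≠ 0 := by linarith
  have hαne : H - 1 / 2 ≠ 0 := by linarith
  have hsumne : (H - 1 / 2) + (H - 1 / 2) ≠ 0 := by linarith
  set Φ : ℝ → ℝ := fun s => ((1 - b) * (t - s) ^ (H - 1/2)
      + b * posPow (u - s) (H - 1/2)) * kn H n s t with hΦ
  set Ψ : ℝ → ℝ := fun s => ((1 - b) * (t - s) ^ (H - 1/2) + b * (u - s) ^ (H - 1/2))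
      * ((t - s) ^ (H - 1/2) - (u - s) ^ (H - 1/2)) with hΨ
  set G : ℝ → ℝ := fun s => (u - s) ^ (2 * (H - 1/2)) - (t - s) ^ (2 * (H - 1/2)) with hG
  -- pointwise identifications
  have heq1 : EqOn Φ Ψ (Icc 0 u) := by
    intro s hs
    have hsu : 0 ≤ u - s := by linarith [hs.2]
    simp only [hΦ, hΨ, kn, ← hu, posPow]
    rcases lt_or_eq_of_le hsu with h | h
    · rw [if_pos h]
    · rw [if_neg (by rw [← h]; exact lt_irrefl 0), ← h, Real.zero_rpow hαne]
  have heq2 : EqOn Φ (fun s => (1 - b) * (t - s) ^ (2 * (H - 1/2))) (Icc u t) := by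
    intro s hs
    have h1 : ¬(0 < u - s) := by simp only [not_lt]; linarith [hs.1]
    have h2 : 0 ≤ t - s := by linarith [hs.2]
    simp only [hΦ, kn, ← hu, posPow, if_neg h1]
    rw [two_mul, Real.rpow_add' h2 hsumne]
    ring
  -- integrabilities
  have iG : IntervalIntegrable G volume 0 u := (ii_shift hr u 0 u).sub (ii_shift hr t 0 u)
  have measΨ : AEStronglyMeasurable Ψ (volume.restrict (Ioc 0 u)) := by
    apply Measurable.aestronglyMeasurable
    exact (((measurable_const.mul ((measurable_const.sub measurable_id).pow
        measurable_const)).add (measurable_const.mul ((measurable_const.sub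
        measurable_id).pow measurable_const))).mul
      (((measurable_const.sub measurable_id).pow measurable_const).sub
        ((measurable_const.sub measurable_id).pow measurable_const)))
  have iΨ : IntegrableOn Ψ (Ioc 0 u) := by
    refine Integrable.mono (g := fun s => 2 * ((t - s) ^ (2 * (H - 1/2))
        + (u - s) ^ (2 * (H - 1/2)))) ?_ measΨ ?_
    · have : IntervalIntegrable (fun s => 2 * ((t - s) ^ (2 * (H - 1/2))
          + (u - s) ^ (2 * (H - 1/2)))) volume 0 u :=
        ((ii_shift hr t 0 u).add (ii_shift hr u 0 u)).const_mul 2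
      exact ((intervalIntegrable_iff_integrableOn_Ioc_of_le hu0).mp this)
    · filter_upwards [ae_restrict_mem measurableSet_Ioc] with s hs
      have hts : 0 ≤ t - s := by linarith [hs.2, hut]
      have hus : 0 ≤ u - s := by linarith [hs.2]
      set F := (t - s) ^ (H - 1/2) with hF
      set K := (u - s) ^ (H - 1/2) with hK
      have hF0 : 0 ≤ F := Real.rpow_nonneg hts _
      have hK0 : 0 ≤ K := Real.rpow_nonneg hus _
      have hFsq : F * F = (t - s) ^ (2 * (H - 1/2)) := by
        rw [two_mul, Real.rpow_add' hts hsumne]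
      have hKsq : K * K = (u - s) ^ (2 * (H - 1/2)) := by
        rw [two_mul, Real.rpow_add' hus hsumne]
      have e1 : (1 - b) * F ≤ 1 * F := mul_le_mul_of_nonneg_right (by linarith) hF0
      have e2 : b * K ≤ 1 * K := mul_le_mul_of_nonneg_right hb1 hK0
      have h1 : |(1 - b) * F + b * K| ≤ F + K := by
        rw [abs_of_nonneg (add_nonneg (mul_nonneg (by linarith) hF0) (mul_nonneg hb0 hK0))]
        linarith
      have h2 : |F - K| ≤ F + K := by
        rw [abs_sub_le_iff]
        constructor <;> linarith
      have : |Ψ s| ≤ (F + K) * (F + K) := by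
        rw [hΨ]; simp only
        rw [abs_mul]
        exact mul_le_mul h1 h2 (abs_nonneg _) (add_nonneg hF0 hK0)
      have hnorm : ‖Ψ s‖ = |Ψ s| := rfl
      rw [hnorm, Real.norm_eq_abs]
      have hb2 : (F + K) * (F + K) ≤ 2 * ((t - s) ^ (2 * (H - 1/2))
          + (u - s) ^ (2 * (H - 1/2))) := by nlinarith [sq_nonneg (F - K), hFsq, hKsq]
      calc |Ψ s| ≤ (F + K) * (F + K) := this
        _ ≤ 2 * ((t - s) ^ (2 * (H - 1/2)) + (u - s) ^ (2 * (H - 1/2))) := hb2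
        _ ≤ |2 * ((t - s) ^ (2 * (H - 1/2)) + (u - s) ^ (2 * (H - 1/2)))| := le_abs_self _
  have iΦ1 : IntervalIntegrable Φ volume 0 u := by
    rw [intervalIntegrable_iff_integrableOn_Ioc_of_le hu0]
    exact iΨ.congr_fun (fun s hs => (heq1 (Ioc_subset_Icc_self hs)).symm) measurableSet_Ioc
  have iΦ2 : IntervalIntegrable Φ volume u t := by
    rw [intervalIntegrable_iff_integrableOn_Ioc_of_le hut]
    have : IntervalIntegrable (fun s => (1 - b) * (t - s) ^ (2 * (H - 1/2))) volume u t :=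
      (ii_shift hr t u t).const_mul _
    exact ((intervalIntegrable_iff_integrableOn_Ioc_of_le hut).mp this).congr_fun
      (fun s hs => (heq2 (Ioc_subset_Icc_self hs)).symm) measurableSet_Ioc
  -- split the integral
  have hsplit : ∫ s in (0 : ℝ)..t, Φ s = (∫ s in (0 : ℝ)..u, Φ s) + ∫ s in u..t, Φ s :=
    (integral_add_adjacent_intervals iΦ1 iΦ2).symm
  -- second piece
  have hp2 : ∫ s in u..t, Φ s = (1 - b) * ((t - u) ^ (2 * H) / (2 * H)) := by
    rw [intervalIntegral.integral_congr (g := fun s => (1 - b) * (t - s) ^ (2 * (H - 1/2)))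
        (by rw [uIcc_of_le hut]; exact heq2)]
    rw [intervalIntegral.integral_const_mul, int_shift hr, h2H, sub_self,
      Real.zero_rpow h2Hne, sub_zero]
  have htu0 : 0 ≤ t - u := by linarith
  have hX0 : 0 ≤ (t - u) ^ (2 * H) := Real.rpow_nonneg htu0 _
  have hv : 0 ≤ (t - u) ^ (2 * H) / (2 * H) := div_nonneg hX0 h2Hpos.le
  have hp2bound : |∫ s in u..t, Φ s| ≤ (t - u) ^ (2 * H) / (2 * H) := by
    rw [hp2, abs_of_nonneg (mul_nonneg (by linarith) hv)]
    calc (1 - b) * ((t - u) ^ (2 * H) / (2 * H))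
        ≤ 1 * ((t - u) ^ (2 * H) / (2 * H)) := mul_le_mul_of_nonneg_right (by linarith) hv
      _ = (t - u) ^ (2 * H) / (2 * H) := one_mul _
  -- first piece
  have haeg : ∀ᵐ s : ℝ, s ≠ u := by
    have h : {a : ℝ | ¬a ≠ u} = {u} := by ext x; simp
    rw [ae_iff, h]
    exact measure_singleton u
  have hae : ∀ᵐ s ∂volume.restrict (Ioc 0 u), s ≠ u := ae_restrict_of_ae haeg
  have hbound1 : ∀ᵐ s ∂volume.restrict (Ioc 0 u), ‖Φ s‖ ≤ G s := by
    filter_upwards [ae_restrict_mem measurableSet_Ioc, hae] with s hs hsne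
    have hsu : 0 < u - s := by
      rcases lt_or_eq_of_le hs.2 with h | h
      · linarith
      · exact absurd h hsne
    have hst : 0 < t - s := by linarith
    rw [Real.norm_eq_abs, heq1 ⟨hs.1.le, hs.2⟩]
    set F := (t - s) ^ (H - 1/2) with hF
    set K := (u - s) ^ (H - 1/2) with hK
    have hF0 : 0 < F := Real.rpow_pos_of_pos hst _
    have hK0 : 0 < K := Real.rpow_pos_of_pos hsu _
    have hFK : F ≤ K := Real.rpow_le_rpow_of_nonpos hsu (by linarith) (by linarith)
    have hFsq : F * F = (t - s) ^ (2 * (H - 1/2)) := by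
      rw [two_mul, Real.rpow_add' hst.le hsumne]
    have hKsq : K * K = (u - s) ^ (2 * (H - 1/2)) := by
      rw [two_mul, Real.rpow_add' hsu.le hsumne]
    have hfac : 0 ≤ ((1 - b) * F + b * K) * (K - F) :=
      mul_nonneg (add_nonneg (mul_nonneg (by linarith) hF0.le) (mul_nonneg hb0 hK0.le))
        (by linarith)
    have hΨs : Ψ s = -(((1 - b) * F + b * K) * (K - F)) := by
      simp only [hΨ, hF, hK]; ring
    have habs : |Ψ s| = ((1 - b) * F + b * K) * (K - F) := by
      rw [hΨs, abs_neg, abs_of_nonneg hfac]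
    rw [habs]; simp only [hG]
    rw [← hKsq, ← hFsq]
    nlinarith [mul_nonneg (sub_nonneg.mpr hFK) (add_nonneg
      (mul_nonneg (by linarith : (0:ℝ) ≤ 1 - b) hK0.le) (mul_nonneg hb0 hF0.le))]
  have hGnn : 0 ≤ ∫ s in (0 : ℝ)..u, G s := by
    apply intervalIntegral.integral_nonneg_of_ae_restrict hu0
    filter_upwards [ae_restrict_mem measurableSet_Icc, ae_restrict_of_ae haeg] with s hs hsne
    have hsu : 0 < u - s := by
      rcases lt_or_eq_of_le hs.2 with h | h
      · linarith
      · exact absurd h hsne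
    have h := Real.rpow_le_rpow_of_nonpos hsu (by linarith : u - s ≤ t - s)
      (by linarith : 2 * (H - 1/2) ≤ 0)
    simp only [Pi.zero_apply, hG]
    linarith
  have hGval : ∫ s in (0 : ℝ)..u, G s
      = (u ^ (2 * H) - (t ^ (2 * H) - (t - u) ^ (2 * H))) / (2 * H) := by
    rw [hG]
    rw [intervalIntegral.integral_sub (ii_shift hr u 0 u) (ii_shift hr t 0 u),
      int_shift hr, int_shift hr, h2H, sub_zero, sub_self, Real.zero_rpow h2Hne, sub_zero,
      sub_zero]
    ring
  have hp1bound : |∫ s in (0 : ℝ)..u, Φ s| ≤ (t - u) ^ (2 * H) / (2 * H) := by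
    have h1 : ‖∫ s in (0 : ℝ)..u, Φ s‖ ≤ |∫ s in (0 : ℝ)..u, G s| := by
      apply intervalIntegral.norm_integral_le_abs_of_norm_le ?_ iG
      rwa [uIoc_of_le hu0]
    rw [abs_of_nonneg hGnn, hGval] at h1
    have hu2H : u ^ (2 * H) ≤ t ^ (2 * H) := Real.rpow_le_rpow hu0 hut h2Hpos.le
    calc |∫ s in (0 : ℝ)..u, Φ s| = ‖∫ s in (0 : ℝ)..u, Φ s‖ := rfl
      _ ≤ (u ^ (2 * H) - (t ^ (2 * H) - (t - u) ^ (2 * H))) / (2 * H) := h1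
      _ ≤ (t - u) ^ (2 * H) / (2 * H) := by
          apply (div_le_div_iff_of_pos_right h2Hpos).mpr
          linarith
  -- combine
  have hfin : (t - u) ^ (2 * H) ≤ (n : ℝ) ^ (-(2 * H)) := by
    have h1 : (t - u) ^ (2 * H) ≤ (1 / (n : ℝ)) ^ (2 * H) :=
      Real.rpow_le_rpow htu0 htu h2Hpos.le
    rwa [one_div, Real.inv_rpow hn'.le, ← Real.rpow_neg hn'.le] at h1
  have hsum : |∫ s in (0 : ℝ)..t, Φ s| ≤ (t - u) ^ (2 * H) / (2 * H)
      + (t - u) ^ (2 * H) / (2 * H) := by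
    rw [hsplit]
    exact (abs_add_le _ _).trans (add_le_add hp1bound hp2bound)
  have hhalf : (t - u) ^ (2 * H) / (2 * H) + (t - u) ^ (2 * H) / (2 * H)
      = (t - u) ^ (2 * H) / H := by
    field_simp
    ring
  calc |∫ s in (0 : ℝ)..t, Φ s| ≤ (t - u) ^ (2 * H) / H := by rw [← hhalf]; exact hsum
    _ ≤ (n : ℝ) ^ (-(2 * H)) / H := (div_le_div_iff_of_pos_right hH0).mpr hfin
    _ = (1 / H) * (n : ℝ) ^ (-(2 * H)) := by ring

/-- Uniform-in-`b` bound `|g_n(b)| ≤ C n^{-2H}`. -/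
theorem gn_uniform_bound (H : ℝ) (hH : H ∈ Ioo (0 : ℝ) (1/2)) :
    ∃ C : ℝ, 0 < C ∧ ∀ n : ℕ, 0 < n → ∀ b ∈ Icc (0 : ℝ) 1,
      |gn H n b| ≤ C * (n : ℝ) ^ (-(2*H)) := by
  obtain ⟨hH0, hH2⟩ := hH
  refine ⟨1 / H, by positivity, ?_⟩
  intro n hn b hb
  have key : ∀ t ∈ uIoc (0 : ℝ) 1,
      ‖∫ s in (0 : ℝ)..t, ((1 - b) * (t - s) ^ (H - 1/2)
        + b * posPow ((⌊(n : ℝ) * t⌋ : ℝ) / n - s) (H - 1/2)) * kn H n s t‖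
      ≤ (1 / H) * (n : ℝ) ^ (-(2 * H)) := by
    intro t ht
    rw [uIoc_of_le zero_le_one] at ht
    exact inner_bound_s13 H hH0 hH2 n hn b hb.1 hb.2 t ht.1 ht.2
  have h := intervalIntegral.norm_integral_le_of_norm_le_const key
  simpa [gn, abs_of_nonneg] using h
end

section
/- Let H ∈ (0,1/2). There exists a constant C > 0 such that for every positive integer n, ∫₀¹ ∫₀ᵗ |k_n(s,t)| ds dt ≤ C · n^{−H−1/2}, where k_n(s,t) = (t−s)^{H−1/2} − (⌊nt⌋/n − s)_+^{H−1/2}. -/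
open MeasureTheory Real Set

lemma aux_intble (p : ℝ) (hp : -1 < p) (a b c : ℝ) :
    IntervalIntegrable (fun s => (c - s) ^ p) volume a b := by
  have := (intervalIntegral.intervalIntegrable_rpow' (a := c - a) (b := c - b) hp).comp_sub_left c
  simpa using this

lemma aux_val (p : ℝ) (hp : -1 < p) (a b c : ℝ) :
    ∫ s in a..b, (c - s) ^ p = ((c - a) ^ (p+1) - (c - b) ^ (p+1)) / (p+1) := by
  rw [intervalIntegral.integral_comp_sub_left (fun x => x ^ p) c,
    integral_rpow (Or.inl hp)]

lemma aux_lint (f : ℝ → ℝ) (a b : ℝ) (hab : a ≤ b) (hf : IntegrableOn f (Ioc a b))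
    (h0 : ∀ x ∈ Ioo a b, 0 ≤ f x) :
    ∫⁻ s in Ioc a b, ENNReal.ofReal (f s) = ENNReal.ofReal (∫ s in a..b, f s) := by
  rw [intervalIntegral.integral_of_le hab, integral_Ioc_eq_integral_Ioo,
    ← setLIntegral_congr (Ioo_ae_eq_Ioc (a := a) (b := b)),
    ← ofReal_integral_eq_lintegral_ofReal (hf.mono_set Ioo_subset_Ioc_self)
      (ae_restrict_of_forall_mem measurableSet_Ioo h0)]

/-- `∫₀¹∫₀ᵗ |k_n(s,t)| ds dt ≤ C n^{-H-1/2}` (Lemma 1 with `α = 0`). -/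
theorem kernel_L1_bound (H : ℝ) (hH : H ∈ Ioo (0 : ℝ) (1/2)) :
    ∃ C : ℝ, 0 < C ∧ ∀ n : ℕ, 0 < n →
      (∫⁻ t in Ioc (0 : ℝ) 1, ∫⁻ s in Ioc (0 : ℝ) t, ENNReal.ofReal |kn H n s t|)
        ≤ ENNReal.ofReal (C * (n : ℝ) ^ (-H - 1/2)) := by
  obtain ⟨hH0, hH2⟩ := hH
  set p : ℝ := H - 1/2 with hpdef
  have hp : -1 < p := by rw [hpdef]; linarith
  have hp0 : p ≤ 0 := by rw [hpdef]; linarith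
  have hp1 : 0 < p + 1 := by linarith
  refine ⟨2 / (H + 1/2), by positivity, fun n hn => ?_⟩
  have hn0 : (0:ℝ) < n := Nat.cast_pos.mpr hn
  set B : ℝ := ((1:ℝ)/n) ^ (p+1) / (p+1) with hBdef
  have hB0 : 0 ≤ B := by positivity
  have key : ∀ t ∈ Ioc (0:ℝ) 1,
      (∫⁻ s in Ioc (0:ℝ) t, ENNReal.ofReal |kn H n s t|)
        ≤ ENNReal.ofReal (2 / (H + 1/2) * (n : ℝ) ^ (-H - 1/2)) := by
    intro t ht
    obtain ⟨ht0, ht1⟩ := ht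
    set u : ℝ := (⌊(n : ℝ) * t⌋ : ℝ) / n with hudef
    have hu0 : 0 ≤ u := by
      apply div_nonneg _ hn0.le
      exact_mod_cast Int.floor_nonneg.mpr (by positivity)
    have hut : u ≤ t := by
      rw [hudef, div_le_iff₀ hn0, mul_comm]
      exact Int.floor_le _
    have htu : t - u ≤ 1 / n := by
      rw [sub_le_iff_le_add, hudef, ← add_div, le_div_iff₀ hn0, mul_comm]
      have := (Int.lt_floor_add_one ((n:ℝ) * t)).le
      linarith
    have hknIoc : ∀ s ∈ Ioc u t, |kn H n s t| = (t - s) ^ p := by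
      intro s hs
      obtain ⟨hs1, hs2⟩ := hs
      have hneg : ¬ (0 < u - s) := by linarith
      rw [hudef] at hneg
      simp only [kn, posPow, if_neg hneg, sub_zero, ← hpdef]
      exact abs_of_nonneg (Real.rpow_nonneg (by linarith) p)
    have hknIoo : ∀ s ∈ Ioo (0:ℝ) u, |kn H n s t| = (u - s) ^ p - (t - s) ^ p := by
      intro s hs
      obtain ⟨hs1, hs2⟩ := hs
      have hus : 0 < u - s := by linarith
      have hle : (t - s) ^ p ≤ (u - s) ^ p :=
        Real.rpow_le_rpow_of_nonpos hus (by linarith) hp0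
      have hus' := hus
      rw [hudef] at hus'
      simp only [kn, posPow, if_pos hus', ← hpdef, ← hudef, if_pos hus]
      rw [abs_sub_comm, abs_of_nonneg (by linarith)]
    -- piece 2 : over Ioc u t
    have e2 : (∫⁻ s in Ioc u t, ENNReal.ofReal |kn H n s t|)
        = ENNReal.ofReal ((t - u) ^ (p+1) / (p+1)) := by
      rw [setLIntegral_congr_fun measurableSet_Ioc
          (fun s hs => by rw [hknIoc s hs]),
        aux_lint _ _ _ hut
          ((intervalIntegrable_iff_integrableOn_Ioc_of_le hut).mp (aux_intble p hp u t t))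
          (fun x hx => Real.rpow_nonneg (by linarith [(mem_Ioo.mp hx).2]) p),
        aux_val p hp u t t, sub_self, Real.zero_rpow (by linarith), sub_zero]
    -- piece 1 : over Ioc 0 u
    have e1 : (∫⁻ s in Ioc (0:ℝ) u, ENNReal.ofReal |kn H n s t|)
        = ENNReal.ofReal ((u ^ (p+1) - (0:ℝ) ^ (p+1)) / (p+1)
            - (t ^ (p+1) - (t - u) ^ (p+1)) / (p+1)) := by
      have hint1 := (intervalIntegrable_iff_integrableOn_Ioc_of_le hu0).mp
        (aux_intble p hp 0 u u)
      have hint2 := (intervalIntegrable_iff_integrableOn_Ioc_of_le hu0).mp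
        (aux_intble p hp 0 u t)
      have hnn : ∀ x ∈ Ioo (0:ℝ) u, 0 ≤ (u - x) ^ p - (t - x) ^ p := by
        intro x hx
        have hx1 := (mem_Ioo.mp hx).1
        have hx2 := (mem_Ioo.mp hx).2
        have := Real.rpow_le_rpow_of_nonpos (x := u - x) (y := t - x)
          (by linarith) (by linarith) hp0
        linarith
      rw [← setLIntegral_congr (Ioo_ae_eq_Ioc (a := (0:ℝ)) (b := u)),
        setLIntegral_congr_fun measurableSet_Ioo
          (fun s hs => by rw [hknIoo s hs]),
        setLIntegral_congr (Ioo_ae_eq_Ioc (a := (0:ℝ)) (b := u)),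
        aux_lint (fun s => (u - s) ^ p - (t - s) ^ p) _ _ hu0 (hint1.sub hint2) hnn,
        intervalIntegral.integral_sub (aux_intble p hp 0 u u) (aux_intble p hp 0 u t),
        aux_val p hp 0 u u, aux_val p hp 0 u t]
      norm_num
    have hb2 : (t - u) ^ (p+1) ≤ ((1:ℝ)/n) ^ (p+1) :=
      Real.rpow_le_rpow (by linarith) htu hp1.le
    have hval1 : (u ^ (p+1) - (0:ℝ) ^ (p+1)) / (p+1)
        - (t ^ (p+1) - (t - u) ^ (p+1)) / (p+1) ≤ B := by
      have h1 : u ^ (p+1) ≤ t ^ (p+1) := Real.rpow_le_rpow hu0 hut hp1.le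
      have h2 : (0:ℝ) ^ (p+1) = 0 := Real.zero_rpow (by linarith)
      rw [h2, sub_zero, div_sub_div_same, hBdef]
      exact div_le_div_of_nonneg_right (by linarith) hp1.le
    have hval2 : (t - u) ^ (p+1) / (p+1) ≤ B := by
      rw [hBdef]
      exact div_le_div_of_nonneg_right hb2 hp1.le
    calc (∫⁻ s in Ioc (0:ℝ) t, ENNReal.ofReal |kn H n s t|)
        = (∫⁻ s in Ioc (0:ℝ) u, ENNReal.ofReal |kn H n s t|)
          + (∫⁻ s in Ioc u t, ENNReal.ofReal |kn H n s t|) := by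
          rw [← Ioc_union_Ioc_eq_Ioc hu0 hut,
            lintegral_union measurableSet_Ioc (Ioc_disjoint_Ioc_of_le le_rfl)]
      _ ≤ ENNReal.ofReal B + ENNReal.ofReal B := by
          rw [e1, e2]
          exact add_le_add (ENNReal.ofReal_le_ofReal hval1) (ENNReal.ofReal_le_ofReal hval2)
      _ = ENNReal.ofReal (2 / (H + 1/2) * (n : ℝ) ^ (-H - 1/2)) := by
          rw [← ENNReal.ofReal_add hB0 hB0]
          congr 1
          have hpow : ((1:ℝ)/n) ^ (p+1) = (n : ℝ) ^ (-H - 1/2) := by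
            have hexp : -H - 1/2 = -(p+1) := by rw [hpdef]; ring
            rw [one_div, Real.inv_rpow hn0.le, hexp, Real.rpow_neg hn0.le]
          rw [hBdef, hpow, hpdef]
          have h1 : H - 1/2 + 1 = H + 1/2 := by ring
          rw [h1, ← add_div, div_mul_eq_mul_div, two_mul]
  calc (∫⁻ t in Ioc (0 : ℝ) 1, ∫⁻ s in Ioc (0 : ℝ) t, ENNReal.ofReal |kn H n s t|)
      ≤ ∫⁻ _ in Ioc (0:ℝ) 1, ENNReal.ofReal (2 / (H + 1/2) * (n : ℝ) ^ (-H - 1/2)) :=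
        setLIntegral_mono' measurableSet_Ioc key
    _ = ENNReal.ofReal (2 / (H + 1/2) * (n : ℝ) ^ (-H - 1/2)) := by
        rw [setLIntegral_const, Real.volume_Ioc]
        norm_num
end
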